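/- arXiv:2011.02741 — 3 statements merged into one kernel-verified Lean document; each statement's English description precedes it below -/
import Mathlib

section
/- Let (X, G, Φ) be a dynamical system where X is a compact totally disconnected Hausdorff space, and let S be a finite subset of G. If Φ has the S-shadowing property, then (X, G, Φ) is conjugate to the inverse limit of an inverse system of dynamical systems, satisfying the Mittag-Leffler condition, each of whose terms is a shift of finite type over S ∪ {e_G} (a subshift of a full shift over some finite alphabet, with the shift G-action). -/
open Set
open scoped Classical

universe u

/-! ### Dynamical systems: actions of a countable discrete group by homeomorphisms -/

/-- An action of a group `G` on a topological space `X`: each `act g` is a homeomorphism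
(continuity of the inverse follows from `act g⁻¹`). -/
structure DynAction (G X : Type u) [Group G] [TopologicalSpace X] where
  act : G → X → X
  continuous_act : ∀ g : G, Continuous (act g)
  act_one : ∀ x : X, act 1 x = x
  act_mul : ∀ (g g' : G) (x : X), act (g * g') x = act g (act g' x)

section Covers

variable {G X : Type u} [Group G] [TopologicalSpace X]

/-- A finite open cover of `X`. -/
def IsFOC (𝒰 : Finset (Set X)) : Prop :=
  (∀ U ∈ 𝒰, IsOpen U) ∧ ⋃₀ (𝒰 : Set (Set X)) = Set.univ

/-- A finite partition of `X` into nonempty clopen sets. -/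
def IsClopenPartition (𝒰 : Finset (Set X)) : Prop :=
  (∀ U ∈ 𝒰, IsClopen U ∧ U.Nonempty) ∧ ⋃₀ (𝒰 : Set (Set X)) = Set.univ ∧
    ∀ U ∈ 𝒰, ∀ V ∈ 𝒰, U ≠ V → U ∩ V = ∅

/-- `𝒱` refines `𝒰`: every member of `𝒱` is contained in a member of `𝒰`. -/
def Refines (𝒱 𝒰 : Finset (Set X)) : Prop :=
  ∀ V ∈ 𝒱, ∃ U ∈ 𝒰, V ⊆ U

/-- `{U g}` is a pattern of the `(S,𝒰)`-pseudo-orbit `{x g}`: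
all `U g` belong to `𝒰`, and `x (s*g) ∈ U (s*g)` and `Φ_s (x g) ∈ U (s*g)`
for all `g ∈ G`, `s ∈ S`. -/
def IsPseudoOrbitPattern (Φ : DynAction G X) (S : Set G) (𝒰 : Finset (Set X))
    (x : G → X) (U : G → Set X) : Prop :=
  (∀ g : G, U g ∈ 𝒰) ∧
    ∀ g : G, ∀ s ∈ S, x (s * g) ∈ U (s * g) ∧ Φ.act s (x g) ∈ U (s * g)

/-- `{x g}` is an `(S,𝒰)`-pseudo-orbit. -/
def IsPseudoOrbit (Φ : DynAction G X) (S : Set G) (𝒰 : Finset (Set X)) (x : G → X) : Prop :=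
  ∃ U : G → Set X, IsPseudoOrbitPattern Φ S 𝒰 x U

/-- `z` `𝒰`-shadows the family `{x g}`. -/
def Shadows (Φ : DynAction G X) (𝒰 : Finset (Set X)) (z : X) (x : G → X) : Prop :=
  ∀ g : G, ∃ U ∈ 𝒰, Φ.act g z ∈ U ∧ x g ∈ U

/-- The (topological) `S`-shadowing property. -/
def ShadowingProperty (Φ : DynAction G X) (S : Set G) : Prop :=
  ∀ 𝒰 : Finset (Set X), IsFOC 𝒰 → ∃ 𝒱 : Finset (Set X), IsFOC 𝒱 ∧
    ∀ x : G → X, IsPseudoOrbit Φ S 𝒱 x → ∃ z : X, Shadows Φ 𝒰 z x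

/-! ### Equivariant maps, factor maps, conjugacies -/

def IsEquivariant {Y : Type u} [TopologicalSpace Y]
    (ΦX : DynAction G X) (ΦY : DynAction G Y) (f : X → Y) : Prop :=
  ∀ (g : G) (x : X), f (ΦX.act g x) = ΦY.act g (f x)

/-- `f` is a factor map from `(X,G,ΦX)` onto `(Y,G,ΦY)`. -/
def IsFactorMap {Y : Type u} [TopologicalSpace Y]
    (ΦX : DynAction G X) (ΦY : DynAction G Y) (f : X → Y) : Prop :=
  Continuous f ∧ Function.Surjective f ∧ IsEquivariant ΦX ΦY f

/-- `f` is a conjugacy (bijective factor map). -/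
def IsConjugacy {Y : Type u} [TopologicalSpace Y]
    (ΦX : DynAction G X) (ΦY : DynAction G Y) (f : X → Y) : Prop :=
  Continuous f ∧ Function.Bijective f ∧ IsEquivariant ΦX ΦY f

end Covers

/-! ### Shifts, subshifts, shifts of finite type -/

/-- The shift action on `A^G`: `(σ_g x) h = x (h * g)`. -/
def shift (G A : Type u) [Group G] (g : G) (x : G → A) : G → A :=
  fun h => x (h * g)

/-- The full shift `A^G` (product topology) as a dynamical system. -/
def shiftDyn (G A : Type u) [Group G] [TopologicalSpace A] : DynAction G (G → A) where
  act := shift G A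
  continuous_act g := continuous_pi fun h => continuous_apply (h * g)
  act_one x := by funext h; simp [shift]
  act_mul g g' x := by funext h; simp [shift, mul_assoc]

/-- A subshift: a closed shift-invariant subset of the full shift `A^G`. -/
def IsSubshift {G A : Type u} [Group G] [TopologicalSpace A] (Y : Set (G → A)) : Prop :=
  IsClosed Y ∧ ∀ g : G, ∀ x ∈ Y, shift G A g x ∈ Y

/-- The cylinder set determined by the values of `P` on the finite shape `B`. -/
def cylinder {G A : Type u} (B : Finset G) (P : G → A) : Set (G → A) :=
  {y | ∀ b ∈ B, y b = P b}

/-- The language of `Y ⊆ A^G` over the finite shape `B` (a pattern is recorded by any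
function `G → A` with the prescribed values on `B`). -/
def language {G A : Type u} (B : Finset G) (Y : Set (G → A)) : Set (G → A) :=
  {P | (cylinder B P ∩ Y).Nonempty}

/-- `Y` is a shift of finite type over the finite shape `B`: it is cut out by a family of
forbidden patterns on `B`. -/
def IsSFTOver {G A : Type u} [Group G] (B : Finset G) (Y : Set (G → A)) : Prop :=
  ∃ ℱ : Set (G → A), Y = {x | ∀ g : G, ∀ P ∈ ℱ, shift G A g x ∉ cylinder B P}

/-- The shift action restricted to a subshift. -/
def subshiftDyn {G A : Type u} [Group G] [TopologicalSpace A] (Y : Set (G → A))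
    (hY : IsSubshift Y) : DynAction G ↥Y where
  act g x := ⟨shift G A g x.1, hY.2 g x.1 x.2⟩
  continuous_act g := Continuous.subtype_mk
    ((continuous_pi fun h => continuous_apply (h * g)).comp continuous_subtype_val) _
  act_one x := by apply Subtype.ext; funext h; simp [shift]
  act_mul g g' x := by apply Subtype.ext; funext h; simp [shift, mul_assoc]

/-! ### Hitting time sets and mixing-type properties -/

section Mixing

variable {G X : Type u} [Group G] [TopologicalSpace X]

/-- The hitting time set `N(U,V) = {g ≠ e : U ∩ Φ_{g⁻¹}(V) ≠ ∅}`. -/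
def hittingTimes (Φ : DynAction G X) (U V : Set X) : Set G :=
  {g : G | g ≠ 1 ∧ (U ∩ Φ.act g⁻¹ '' V).Nonempty}

/-- Topological mixing: `G \ N(U,V)` is finite for all nonempty open `U, V`. -/
def IsMixing (Φ : DynAction G X) : Prop :=
  ∀ U V : Set X, IsOpen U → IsOpen V → U.Nonempty → V.Nonempty →
    ((hittingTimes Φ U V)ᶜ : Set G).Finite

/-- Minimality: there is no nonempty proper closed invariant subset. -/
def IsMinimal (Φ : DynAction G X) : Prop :=
  ∀ K : Set X, IsClosed K → (∀ g : G, ∀ x ∈ K, Φ.act g x ∈ K) →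
    K = ∅ ∨ K = Set.univ

end Mixing

/-! ### Inverse systems of subshifts -/

/-- An inverse system of dynamical systems whose terms are subshifts over finite
(discrete) alphabets, with the shift `G`-action. -/
structure SubshiftInvSys (G : Type u) [Group G] (Λ : Type u) [Preorder Λ] where
  A : Λ → Type u
  [topoA : ∀ l, TopologicalSpace (A l)]
  [discA : ∀ l, DiscreteTopology (A l)]
  [finA : ∀ l, Finite (A l)]
  Y : ∀ l : Λ, Set (G → A l)
  subshift : ∀ l : Λ, IsSubshift (Y l)
  bond : ∀ {l m : Λ}, l ≤ m → ↥(Y m) → ↥(Y l)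
  bond_cont : ∀ {l m : Λ} (h : l ≤ m), Continuous (bond h)
  bond_refl : ∀ (l : Λ) (x : ↥(Y l)), bond (le_refl l) x = x
  bond_comp : ∀ {l m n : Λ} (h1 : l ≤ m) (h2 : m ≤ n) (x : ↥(Y n)),
    bond h1 (bond h2 x) = bond (h1.trans h2) x
  bond_equivariant : ∀ {l m : Λ} (h : l ≤ m) (g : G) (x : ↥(Y m)),
    (subshiftDyn (Y l) (subshift l)).act g (bond h x)
      = bond h ((subshiftDyn (Y m) (subshift m)).act g x)

namespace SubshiftInvSys

variable {G Λ : Type u} [Group G] [Preorder Λ]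

instance (𝒮 : SubshiftInvSys G Λ) (l : Λ) : TopologicalSpace (𝒮.A l) := 𝒮.topoA l
instance (𝒮 : SubshiftInvSys G Λ) (l : Λ) : DiscreteTopology (𝒮.A l) := 𝒮.discA l
instance (𝒮 : SubshiftInvSys G Λ) (l : Λ) : Finite (𝒮.A l) := 𝒮.finA l

/-- The `G`-action on the term `Y l` (the restricted shift). -/
def termDyn (𝒮 : SubshiftInvSys G Λ) (l : Λ) : DynAction G ↥(𝒮.Y l) :=
  subshiftDyn (𝒮.Y l) (𝒮.subshift l)

/-- The inverse limit of the system, as a subset of the product. -/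
def limitSet (𝒮 : SubshiftInvSys G Λ) : Set (∀ l : Λ, ↥(𝒮.Y l)) :=
  {x | ∀ (l m : Λ) (h : l ≤ m), 𝒮.bond h (x m) = x l}

lemma act_mem_limitSet (𝒮 : SubshiftInvSys G Λ) (g : G) (x : ∀ l : Λ, ↥(𝒮.Y l))
    (hx : x ∈ 𝒮.limitSet) : (fun l => (𝒮.termDyn l).act g (x l)) ∈ 𝒮.limitSet := by
  intro l m h
  show 𝒮.bond h ((𝒮.termDyn m).act g (x m)) = (𝒮.termDyn l).act g (x l)
  rw [show (𝒮.termDyn m).act g (x m)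
        = (subshiftDyn (𝒮.Y m) (𝒮.subshift m)).act g (x m) from rfl,
      ← 𝒮.bond_equivariant h g (x m)]
  show (𝒮.termDyn l).act g (𝒮.bond h (x m)) = _
  rw [hx l m h]

/-- The induced `G`-action `σ*` on the inverse limit. -/
def limitDyn (𝒮 : SubshiftInvSys G Λ) : DynAction G ↥𝒮.limitSet where
  act g x := ⟨fun l => (𝒮.termDyn l).act g (x.1 l), 𝒮.act_mem_limitSet g x.1 x.2⟩
  continuous_act g := Continuous.subtype_mk
    (continuous_pi fun l => ((𝒮.termDyn l).continuous_act g).comp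
      ((continuous_apply l).comp continuous_subtype_val)) _
  act_one x := by
    apply Subtype.ext; funext l
    exact (𝒮.termDyn l).act_one (x.1 l)
  act_mul g g' x := by
    apply Subtype.ext; funext l
    exact (𝒮.termDyn l).act_mul g g' (x.1 l)

/-- The Mittag-Leffler condition. -/
def ML (𝒮 : SubshiftInvSys G Λ) : Prop :=
  ∀ l : Λ, ∃ m : Λ, ∃ h : l ≤ m, ∀ (n : Λ) (h' : m ≤ n),
    Set.range (𝒮.bond (h.trans h')) = Set.range (𝒮.bond h)

end SubshiftInvSys

/-- An inverse system of subshifts over some directed index set, packaged together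
with its (directed, preordered) index. -/
structure SubshiftInvSysPkg (G : Type u) [Group G] where
  Idx : Type u
  [pre : Preorder Idx]
  directed : IsDirected Idx (· ≤ ·)
  sys : SubshiftInvSys G Idx

namespace SubshiftInvSysPkg

variable {G : Type u} [Group G]

instance (P : SubshiftInvSysPkg G) : Preorder P.Idx := P.pre

end SubshiftInvSysPkg

/-! ### Auxiliary development for the proof -/

section Aux

variable {X : Type} [TopologicalSpace X]

/-- The alphabet attached to a finite family of subsets of `X`. -/
def Letter (𝒰 : Finset (Set X)) : Type := {U : Set X // U ∈ 𝒰}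

instance (𝒰 : Finset (Set X)) : TopologicalSpace (Letter 𝒰) := ⊥
instance (𝒰 : Finset (Set X)) : DiscreteTopology (Letter 𝒰) := ⟨rfl⟩
instance (𝒰 : Finset (Set X)) : Finite (Letter 𝒰) :=
  inferInstanceAs (Finite {U : Set X // U ∈ 𝒰})

lemma Letter.ext {𝒰 : Finset (Set X)} {a b : Letter 𝒰} (h : a.1 = b.1) : a = b :=
  Subtype.ext h

/-- The member of a covering family containing `x` (a choice). -/
noncomputable def part (𝒰 : Finset (Set X)) (hcov : ⋃₀ (𝒰 : Set (Set X)) = Set.univ)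
    (x : X) : Letter 𝒰 :=
  ⟨(Set.mem_sUnion.mp (hcov ▸ Set.mem_univ x)).choose,
    (Set.mem_sUnion.mp (hcov ▸ Set.mem_univ x)).choose_spec.1⟩

lemma mem_part (𝒰 : Finset (Set X)) (hcov : ⋃₀ (𝒰 : Set (Set X)) = Set.univ) (x : X) :
    x ∈ (part 𝒰 hcov x).1 :=
  (Set.mem_sUnion.mp (hcov ▸ Set.mem_univ x)).choose_spec.2

lemma part_eq {𝒰 : Finset (Set X)} (h : IsClopenPartition 𝒰) {x : X} {U : Set X}
    (hU : U ∈ 𝒰) (hx : x ∈ U) :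
    (part 𝒰 h.2.1 x).1 = U := by
  by_contra hne
  have h2 := h.2.2 _ (part 𝒰 h.2.1 x).2 _ hU hne
  have : x ∈ (part 𝒰 h.2.1 x).1 ∩ U := ⟨mem_part 𝒰 h.2.1 x, hx⟩
  rw [h2] at this
  exact this

lemma part_continuous {𝒰 : Finset (Set X)} (h : IsClopenPartition 𝒰) :
    Continuous (part 𝒰 h.2.1) := by
  rw [continuous_discrete_rng]
  intro b
  have : part 𝒰 h.2.1 ⁻¹' {b} = b.1 := by
    ext x
    simp only [Set.mem_preimage, Set.mem_singleton_iff]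
    constructor
    · rintro rfl; exact mem_part _ _ x
    · intro hx; exact Letter.ext (part_eq h b.2 hx)
  rw [this]
  exact ((h.1 _ b.2).1).2

/-- The letter map induced by a refinement: sends a member of `𝒲` to a chosen
member of `𝒰` containing it. -/
noncomputable def upLetter {𝒲 𝒰 : Finset (Set X)} (h : Refines 𝒲 𝒰) (W : Letter 𝒲) :
    Letter 𝒰 :=
  ⟨(h W.1 W.2).choose, (h W.1 W.2).choose_spec.1⟩

lemma subset_upLetter {𝒲 𝒰 : Finset (Set X)} (h : Refines 𝒲 𝒰) (W : Letter 𝒲) :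
    W.1 ⊆ (upLetter h W).1 :=
  (h W.1 W.2).choose_spec.2

lemma upLetter_eq {𝒲 𝒰 : Finset (Set X)} (h : Refines 𝒲 𝒰) (h𝒰 : IsClopenPartition 𝒰)
    {W : Letter 𝒲} (hne : W.1.Nonempty) {U : Set X} (hU : U ∈ 𝒰) (hWU : W.1 ⊆ U) :
    (upLetter h W).1 = U := by
  by_contra hneq
  have h2 := h𝒰.2.2 _ (upLetter h W).2 _ hU hneq
  obtain ⟨x, hx⟩ := hne
  have : x ∈ (upLetter h W).1 ∩ U := ⟨subset_upLetter h W hx, hWU hx⟩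
  rw [h2] at this
  exact this

end Aux

section SFTConstruction

variable {G X : Type} [Group G] [TopologicalSpace X]

/-- A pattern on the shape `insert 1 S` is good if it is realized as the
`insert 1 S`-part of an orbit-with-errors: there is a point whose `s`-images lie in the
prescribed cells. -/
def GoodPat (Φ : DynAction G X) (S : Finset G) {𝒰 : Finset (Set X)}
    (P : G → Letter 𝒰) : Prop :=
  ∃ x : X, ∀ s ∈ insert (1 : G) S, Φ.act s x ∈ (P s).1

/-- The SFT of pseudo-orbit patterns. -/
def Ysft (Φ : DynAction G X) (S : Finset G) (𝒰 : Finset (Set X)) :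
    Set (G → Letter 𝒰) :=
  {c | ∀ g : G, GoodPat Φ S (shift G (Letter 𝒰) g c)}

lemma goodPat_congr (Φ : DynAction G X) (S : Finset G) {𝒰 : Finset (Set X)}
    {P Q : G → Letter 𝒰} (h : ∀ b ∈ (insert (1 : G) S : Finset G), P b = Q b) :
    GoodPat Φ S P → GoodPat Φ S Q := by
  rintro ⟨x, hx⟩
  exact ⟨x, fun s hs => (h s hs) ▸ hx s hs⟩

lemma Ysft_isSFT (Φ : DynAction G X) (S : Finset G) (𝒰 : Finset (Set X)) :
    IsSFTOver (insert (1 : G) S) (Ysft Φ S 𝒰) := by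
  refine ⟨{P | ¬ GoodPat Φ S P}, ?_⟩
  ext c
  constructor
  · intro hc g P hP hcyl
    exact hP (goodPat_congr Φ S (fun b hb => hcyl b hb) (hc g))
  · intro hc g
    by_contra hbad
    exact hc g _ hbad (fun b _ => rfl)

lemma Ysft_isSubshift (Φ : DynAction G X) (S : Finset G) (𝒰 : Finset (Set X)) :
    IsSubshift (Ysft Φ S 𝒰) := by
  constructor
  · have : Ysft Φ S 𝒰 = ⋂ g : G,
        (fun c : G → Letter 𝒰 => fun b : (insert (1 : G) S : Finset G) => c (b.1 * g)) ⁻¹'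
          {t | ∃ x : X, ∀ b : (insert (1 : G) S : Finset G), Φ.act b.1 x ∈ (t b).1} := by
      ext c
      simp only [Set.mem_iInter, Set.mem_preimage, Set.mem_setOf_eq]
      constructor
      · intro hc g
        obtain ⟨x, hx⟩ := hc g
        exact ⟨x, fun b => hx b.1 b.2⟩
      · intro hc g
        obtain ⟨x, hx⟩ := hc g
        exact ⟨x, fun s hs => hx ⟨s, hs⟩⟩
    rw [this]
    refine isClosed_iInter fun g => IsClosed.preimage ?_ (isClosed_discrete _)
    exact continuous_pi fun b => continuous_apply (b.1 * g)
  · intro g c hc h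
    have : shift G (Letter 𝒰) h (shift G (Letter 𝒰) g c) = shift G (Letter 𝒰) (h * g) c := by
      funext k; simp [shift, mul_assoc]
    rw [this]
    exact hc (h * g)

end SFTConstruction

section PartitionLemmas

variable {X : Type} [TopologicalSpace X]

lemma refines_trans {𝒲 𝒱 𝒰 : Finset (Set X)} (h1 : Refines 𝒲 𝒱) (h2 : Refines 𝒱 𝒰) :
    Refines 𝒲 𝒰 := by
  intro W hW
  obtain ⟨V, hV, hWV⟩ := h1 W hW
  obtain ⟨U, hU, hVU⟩ := h2 V hV
  exact ⟨U, hU, hWV.trans hVU⟩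

/-- Common refinement of two clopen partitions. -/
lemma exists_common_refinement {𝒰 𝒱 : Finset (Set X)} (h𝒰 : IsClopenPartition 𝒰)
    (h𝒱 : IsClopenPartition 𝒱) :
    ∃ 𝒲 : Finset (Set X), IsClopenPartition 𝒲 ∧ Refines 𝒲 𝒰 ∧ Refines 𝒲 𝒱 := by
  refine ⟨((𝒰 ×ˢ 𝒱).image fun p => p.1 ∩ p.2).filter (fun W => W.Nonempty), ?_, ?_, ?_⟩
  · refine ⟨?_, ?_, ?_⟩
    · intro W hW
      simp only [Finset.mem_filter, Finset.mem_image, Finset.mem_product] at hW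
      obtain ⟨⟨⟨U, V⟩, ⟨hU, hV⟩, rfl⟩, hne⟩ := hW
      exact ⟨((h𝒰.1 U hU).1).inter (h𝒱.1 V hV).1, hne⟩
    · apply Set.eq_univ_of_forall
      intro x
      have hU := mem_part 𝒰 h𝒰.2.1 x
      have hV := mem_part 𝒱 h𝒱.2.1 x
      refine Set.mem_sUnion.mpr ⟨(part 𝒰 h𝒰.2.1 x).1 ∩ (part 𝒱 h𝒱.2.1 x).1, ?_, hU, hV⟩
      simp only [Finset.coe_filter, Finset.mem_image, Finset.mem_product, Set.mem_setOf_eq]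
      exact ⟨⟨⟨_, _⟩, ⟨(part 𝒰 h𝒰.2.1 x).2, (part 𝒱 h𝒱.2.1 x).2⟩, rfl⟩, ⟨x, hU, hV⟩⟩
    · intro W hW W' hW' hne
      simp only [Finset.mem_filter, Finset.mem_image, Finset.mem_product] at hW hW'
      obtain ⟨⟨⟨U, V⟩, ⟨hU, hV⟩, rfl⟩, -⟩ := hW
      obtain ⟨⟨⟨U', V'⟩, ⟨hU', hV'⟩, rfl⟩, -⟩ := hW'
      by_contra hne2
      obtain ⟨x, ⟨hxU, hxV⟩, hxU', hxV'⟩ :=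
        Set.nonempty_iff_ne_empty.mpr hne2
      have hUU : U = U' := by
        by_contra hcc
        have := h𝒰.2.2 U hU U' hU' hcc
        have hx : x ∈ U ∩ U' := ⟨hxU, hxU'⟩
        rw [this] at hx; exact hx
      have hVV : V = V' := by
        by_contra hcc
        have := h𝒱.2.2 V hV V' hV' hcc
        have hx : x ∈ V ∩ V' := ⟨hxV, hxV'⟩
        rw [this] at hx; exact hx
      exact hne (by rw [hUU, hVV])
  · intro W hW
    simp only [Finset.mem_filter, Finset.mem_image, Finset.mem_product] at hW
    obtain ⟨⟨⟨U, V⟩, ⟨hU, hV⟩, rfl⟩, -⟩ := hW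
    exact ⟨U, hU, Set.inter_subset_left⟩
  · intro W hW
    simp only [Finset.mem_filter, Finset.mem_image, Finset.mem_product] at hW
    obtain ⟨⟨⟨U, V⟩, ⟨hU, hV⟩, rfl⟩, -⟩ := hW
    exact ⟨V, hV, Set.inter_subset_right⟩

/-- Disjointification of a finite clopen cover. -/
lemma exists_clopenPartition_refining_fin {n : ℕ} (V : Fin n → Set X)
    (hcl : ∀ i, IsClopen (V i)) (hcov : (⋃ i, V i) = Set.univ) :
    ∃ 𝒲 : Finset (Set X), IsClopenPartition 𝒲 ∧ ∀ W ∈ 𝒲, ∃ i, W ⊆ V i := by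
  set W : Fin n → Set X := fun i => V i \ ⋃ j : Fin n, ⋃ (_ : j < i), V j with hW
  have hWcl : ∀ i, IsClopen (W i) := by
    intro i
    refine (hcl i).diff ?_
    refine (Set.toFinite {j : Fin n | j < i}).isClopen_biUnion fun j _ => hcl j
  have hWsub : ∀ i, W i ⊆ V i := fun i => Set.diff_subset
  refine ⟨(Finset.univ.image W).filter (fun s => s.Nonempty), ⟨?_, ?_, ?_⟩, ?_⟩
  · intro U hU
    simp only [Finset.mem_filter, Finset.mem_image, Finset.mem_univ, true_and] at hU
    obtain ⟨⟨i, rfl⟩, hne⟩ := hU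
    exact ⟨hWcl i, hne⟩
  · apply Set.eq_univ_of_forall
    intro x
    have hx : ∃ k : ℕ, ∃ hk : k < n, x ∈ V ⟨k, hk⟩ := by
      have : x ∈ ⋃ i, V i := hcov ▸ Set.mem_univ x
      obtain ⟨i, hi⟩ := Set.mem_iUnion.mp this
      exact ⟨i.1, i.2, by simpa using hi⟩
    obtain ⟨hk, hxk⟩ := (Nat.find_spec hx)
    set k := Nat.find hx
    have hxW : x ∈ W ⟨k, hk⟩ := by
      refine ⟨hxk, ?_⟩
      intro hmem
      simp only [Set.mem_iUnion] at hmem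
      obtain ⟨j, hj, hxj⟩ := hmem
      exact Nat.find_min hx (m := j.1) hj ⟨j.2, by simpa using hxj⟩
    refine Set.mem_sUnion.mpr ⟨W ⟨k, hk⟩, ?_, hxW⟩
    simp only [Finset.coe_filter, Finset.mem_image, Finset.mem_univ, true_and,
      Set.mem_setOf_eq]
    exact ⟨⟨⟨k, hk⟩, rfl⟩, ⟨x, hxW⟩⟩
  · intro U hU U' hU' hne
    simp only [Finset.mem_filter, Finset.mem_image, Finset.mem_univ, true_and] at hU hU'
    obtain ⟨⟨i, rfl⟩, -⟩ := hU
    obtain ⟨⟨i', rfl⟩, -⟩ := hU'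
    have hii : i ≠ i' := fun h => hne (by rw [h])
    have key : ∀ a b : Fin n, a < b → W a ∩ W b = ∅ := by
      intro a b hab
      apply Set.eq_empty_of_forall_notMem
      rintro x ⟨hxa, hxb⟩
      exact hxb.2 (Set.mem_iUnion.mpr ⟨a, Set.mem_iUnion.mpr ⟨hab, hxa.1⟩⟩)
    rcases lt_or_gt_of_ne hii with h | h
    · exact key i i' h
    · rw [Set.inter_comm]; exact key i' i h
  · intro U hU
    simp only [Finset.mem_filter, Finset.mem_image, Finset.mem_univ, true_and] at hU
    obtain ⟨⟨i, rfl⟩, -⟩ := hU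
    exact ⟨i, hWsub i⟩

variable [CompactSpace X] [T2Space X] [TotallyDisconnectedSpace X]

/-- In a compact totally disconnected Hausdorff space, every finite open cover is
refined by a clopen partition. -/
lemma exists_clopenPartition_refining {𝒰 : Finset (Set X)} (h : IsFOC 𝒰) :
    ∃ 𝒲 : Finset (Set X), IsClopenPartition 𝒲 ∧ Refines 𝒲 𝒰 := by
  -- choose for each x a clopen neighborhood inside a member of 𝒰
  have hx : ∀ x : X, ∃ V : Set X, (IsClopen V ∧ x ∈ V) ∧ ∃ U ∈ 𝒰, V ⊆ U := by
    intro x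
    have : x ∈ ⋃₀ (𝒰 : Set (Set X)) := h.2 ▸ Set.mem_univ x
    obtain ⟨U, hU, hxU⟩ := Set.mem_sUnion.mp this
    obtain ⟨V, hVcl, hxV, hVU⟩ := compact_exists_isClopen_in_isOpen (h.1 U hU) hxU
    exact ⟨V, ⟨hVcl, hxV⟩, U, hU, hVU⟩
  choose V hV hVU using hx
  have hcov : Set.univ ⊆ ⋃ x : X, V x := fun x _ => Set.mem_iUnion.mpr ⟨x, (hV x).2⟩
  obtain ⟨t, ht⟩ := CompactSpace.isCompact_univ.elim_finite_subcover V
    (fun x => (hV x).1.2) hcov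
  -- reindex by Fin
  set L := t.toList with hL
  have hmemL : ∀ x : X, ∃ i : Fin L.length, x ∈ V (L.get i) := by
    intro x
    obtain ⟨y, hy, hxy⟩ := Set.mem_iUnion₂.mp (ht (Set.mem_univ x))
    obtain ⟨i, hi⟩ := List.get_of_mem (Finset.mem_toList.mpr hy)
    exact ⟨i, hi ▸ hxy⟩
  obtain ⟨𝒲, h𝒲, href⟩ := exists_clopenPartition_refining_fin
    (fun i : Fin L.length => V (L.get i)) (fun i => (hV _).1)
    (Set.eq_univ_of_forall fun x => Set.mem_iUnion.mpr (hmemL x))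
  refine ⟨𝒲, h𝒲, ?_⟩
  intro W hW
  obtain ⟨i, hi⟩ := href W hW
  obtain ⟨U, hU, hVUi⟩ := hVU (L.get i)
  exact ⟨U, hU, hi.trans hVUi⟩

lemma isFOC_of_clopenPartition {𝒰 : Finset (Set X)} (h : IsClopenPartition 𝒰) :
    IsFOC 𝒰 :=
  ⟨fun U hU => ((h.1 U hU).1).2, h.2.1⟩

end PartitionLemmas

/-! ### The inverse system of SFTs attached to a system with shadowing -/

section MainConstruction

variable (X : Type) [TopologicalSpace X]

/-- Index type: clopen partitions of `X`, ordered by refinement. -/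
def PartIdx : Type := {𝒰 : Finset (Set X) // IsClopenPartition 𝒰}

noncomputable instance : Preorder (PartIdx X) where
  le l m := Refines m.1 l.1
  le_refl l := fun U hU => ⟨U, hU, subset_rfl⟩
  le_trans l m n h1 h2 := refines_trans h2 h1

variable {X}

lemma partIdx_directed [CompactSpace X] [T2Space X] [TotallyDisconnectedSpace X] :
    IsDirected (PartIdx X) (· ≤ ·) := by
  constructor
  intro l m
  obtain ⟨𝒲, h𝒲, h1, h2⟩ := exists_common_refinement l.2 m.2
  exact ⟨⟨𝒲, h𝒲⟩, h1, h2⟩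

instance : Nonempty (PartIdx X) := by
  refine ⟨⟨({Set.univ} : Finset (Set X)).filter (fun U => U.Nonempty), ?_, ?_, ?_⟩⟩
  · intro U hU
    simp only [Finset.mem_filter, Finset.mem_singleton] at hU
    exact ⟨hU.1 ▸ isClopen_univ, hU.2⟩
  · apply Set.eq_univ_of_forall
    intro x
    refine Set.mem_sUnion.mpr ⟨Set.univ, ?_, Set.mem_univ x⟩
    rw [Finset.mem_coe, Finset.mem_filter]
    exact ⟨Finset.mem_singleton_self _, ⟨x, Set.mem_univ x⟩⟩
  · intro U hU V hV hne
    simp only [Finset.mem_filter, Finset.mem_singleton] at hU hV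
    exact absurd (hU.1.trans hV.1.symm) hne

variable {G : Type} [Group G]

/-- The itinerary of `x` with respect to a clopen partition. -/
noncomputable def codefn (Φ : DynAction G X) (l : PartIdx X) (x : X) : G → Letter l.1 :=
  fun g => part l.1 l.2.2.1 (Φ.act g x)

lemma codefn_mem_Ysft (Φ : DynAction G X) (S : Finset G) (l : PartIdx X) (x : X) :
    codefn Φ l x ∈ Ysft Φ S l.1 := by
  intro g
  refine ⟨Φ.act g x, fun s _ => ?_⟩
  show Φ.act s (Φ.act g x) ∈ (codefn Φ l x (s * g)).1
  rw [← Φ.act_mul]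
  exact mem_part _ _ _

lemma upLetter_part {l m : PartIdx X} (h : l ≤ m) (y : X) :
    upLetter h (part m.1 m.2.2.1 y) = part l.1 l.2.2.1 y := by
  refine Letter.ext ?_
  rw [part_eq l.2 (upLetter h (part m.1 m.2.2.1 y)).2
    (subset_upLetter h _ (mem_part m.1 m.2.2.1 y))]

lemma upLetter_codefn (Φ : DynAction G X) {l m : PartIdx X} (h : l ≤ m) (x : X) (g : G) :
    upLetter h (codefn Φ m x g) = codefn Φ l x g :=
  upLetter_part h _

/-- The inverse system of pseudo-orbit SFTs. -/
noncomputable def theSys (Φ : DynAction G X) (S : Finset G) :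
    SubshiftInvSys G (PartIdx X) where
  A l := Letter l.1
  Y l := Ysft Φ S l.1
  subshift l := Ysft_isSubshift Φ S l.1
  bond h c := ⟨fun g => upLetter h (c.1 g), by
    intro g
    obtain ⟨x, hx⟩ := c.2 g
    exact ⟨x, fun s hs => subset_upLetter h _ (hx s hs)⟩⟩
  bond_cont h := by
    refine Continuous.subtype_mk (continuous_pi fun g => ?_) _
    exact (continuous_of_discreteTopology (f := fun L => upLetter h L)).comp
      ((continuous_apply g).comp continuous_subtype_val)
  bond_refl := fun l c => by
    apply Subtype.ext; funext g
    refine Letter.ext ?_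
    have hne : (c.1 g).1.Nonempty := (l.2.1 _ (c.1 g).2).2
    exact upLetter_eq (show Refines l.1 l.1 from le_refl l) l.2 hne (c.1 g).2 subset_rfl
  bond_comp := fun {l m n} h1 h2 c => by
    apply Subtype.ext; funext g
    refine Letter.ext ?_
    have hne : (c.1 g).1.Nonempty := (n.2.1 _ (c.1 g).2).2
    exact (upLetter_eq (h1.trans h2) l.2 hne (upLetter h1 (upLetter h2 (c.1 g))).2
      ((subset_upLetter h2 _).trans (subset_upLetter h1 _))).symm
  bond_equivariant h g c := by
    apply Subtype.ext; funext k
    rfl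

/-- The itinerary of `x` packaged as a point of the SFT. -/
noncomputable def codeY (Φ : DynAction G X) (S : Finset G) (l : PartIdx X) (x : X) :
    ↥((theSys Φ S).Y l) :=
  ⟨codefn Φ l x, codefn_mem_Ysft Φ S l x⟩

lemma bond_codeY (Φ : DynAction G X) (S : Finset G) {l m : PartIdx X} (h : l ≤ m) (x : X) :
    (theSys Φ S).bond h (codeY Φ S m x) = codeY Φ S l x :=
  Subtype.ext (funext fun g => upLetter_codefn Φ h x g)

variable [CompactSpace X] [T2Space X] [TotallyDisconnectedSpace X]

/-- Key lemma: shadowing provides, above every clopen partition `l`, a finer partition `m`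
such that the bonding map sends every pseudo-orbit pattern over `m` to an itinerary over
`l`. -/
lemma exists_shadowing_index (Φ : DynAction G X) (S : Finset G)
    (hsh : ShadowingProperty Φ (S : Set G)) (l : PartIdx X) :
    ∃ m : PartIdx X, ∃ h : l ≤ m, ∀ c ∈ Ysft Φ S m.1,
      ∃ z : X, ∀ g : G, upLetter h (c g) = codefn Φ l z g := by
  obtain ⟨𝒱, h𝒱FOC, h𝒱⟩ := hsh l.1 (isFOC_of_clopenPartition l.2)
  obtain ⟨𝒲₀, h𝒲₀, href₀⟩ := exists_clopenPartition_refining h𝒱FOC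
  obtain ⟨𝒲, h𝒲, hrefl, href𝒲₀⟩ := exists_common_refinement l.2 h𝒲₀
  refine ⟨⟨𝒲, h𝒲⟩, hrefl, ?_⟩
  intro c hc
  -- choose witnesses for the pseudo-orbit
  choose x hx using hc
  have hxg : ∀ g : G, x g ∈ (c g).1 := by
    intro g
    have := hx g 1 (Finset.mem_insert_self 1 S)
    rw [Φ.act_one] at this
    simpa [shift] using this
  have h𝒱ref : Refines 𝒲 𝒱 := refines_trans href𝒲₀ href₀
  -- x is an (S,𝒱)-pseudo-orbit
  have hpo : IsPseudoOrbit Φ (S : Set G) 𝒱 x := by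
    refine ⟨fun g => (upLetter h𝒱ref (c g)).1, fun g => (upLetter h𝒱ref (c g)).2, ?_⟩
    intro g s hs
    refine ⟨subset_upLetter h𝒱ref _ (hxg (s * g)), subset_upLetter h𝒱ref _ ?_⟩
    exact hx g s (Finset.mem_insert_of_mem (Finset.mem_coe.mp hs))
  obtain ⟨z, hz⟩ := h𝒱 x hpo
  refine ⟨z, fun g => ?_⟩
  obtain ⟨U, hU, hzU, hxU⟩ := hz g
  have h1 : (codefn Φ l z g).1 = U := part_eq l.2 hU hzU
  have h2 : (upLetter hrefl (c g)).1 = U := by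
    by_contra hne
    have hdis := l.2.2.2 _ (upLetter hrefl (c g)).2 _ hU hne
    have : x g ∈ (upLetter hrefl (c g)).1 ∩ U :=
      ⟨subset_upLetter hrefl _ (hxg g), hxU⟩
    rw [hdis] at this
    exact this
  exact Letter.ext (h2.trans h1.symm)

lemma codefn_continuous (Φ : DynAction G X) (l : PartIdx X) :
    Continuous (codefn Φ l) :=
  continuous_pi fun g => (part_continuous l.2).comp (Φ.continuous_act g)

/-- A two-element clopen partition separating two points. -/
lemma exists_separating_partIdx {x y : X} (hne : x ≠ y) :
    ∃ l : PartIdx X, ∃ C : Set X, C ∈ l.1 ∧ Cᶜ ∈ l.1 ∧ x ∈ C ∧ y ∈ Cᶜ := by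
  obtain ⟨C, hC, hxC, hyC⟩ := exists_isClopen_of_totally_separated hne
  have hCne : C.Nonempty := ⟨x, hxC⟩
  have hCcne : Cᶜ.Nonempty := ⟨y, hyC⟩
  refine ⟨⟨({C, Cᶜ} : Finset (Set X)).filter (fun U => U.Nonempty), ?_, ?_, ?_⟩, C, ?_, ?_, hxC, hyC⟩
  · intro U hU
    simp only [Finset.mem_filter, Finset.mem_insert, Finset.mem_singleton] at hU
    rcases hU.1 with rfl | rfl
    exacts [⟨hC, hU.2⟩, ⟨hC.compl, hU.2⟩]
  · apply Set.eq_univ_of_forall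
    intro w
    by_cases hw : w ∈ C
    · refine Set.mem_sUnion.mpr ⟨C, ?_, hw⟩
      rw [Finset.mem_coe, Finset.mem_filter]
      exact ⟨Finset.mem_insert_self _ _, ⟨w, hw⟩⟩
    · refine Set.mem_sUnion.mpr ⟨Cᶜ, ?_, hw⟩
      rw [Finset.mem_coe, Finset.mem_filter]
      exact ⟨Finset.mem_insert_of_mem (Finset.mem_singleton_self _), ⟨w, hw⟩⟩
  · intro U hU V hV hUV
    simp only [Finset.mem_filter, Finset.mem_insert, Finset.mem_singleton] at hU hV
    rcases hU.1 with rfl | rfl <;> rcases hV.1 with rfl | rfl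
    · exact absurd rfl hUV
    · exact Set.inter_compl_self U
    · exact Set.compl_inter_self V
    · exact absurd rfl hUV
  · rw [Finset.mem_filter]
    exact ⟨Finset.mem_insert_self _ _, hCne⟩
  · rw [Finset.mem_filter]
    exact ⟨Finset.mem_insert_of_mem (Finset.mem_singleton_self _), hCcne⟩

end MainConstruction

/-- **Theorem 1.1 (first half).** If `X` is compact, totally disconnected and Hausdorff
and `Φ` has the `S`-shadowing property, then `(X,G,Φ)` is conjugate to the inverse limit
of an ML inverse system of shifts of finite type over `S ∪ {e_G}`. -/
theorem shadowing_conjugate_invlim_SFT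
    {G X : Type} [Group G] [Countable G] [TopologicalSpace X]
    [CompactSpace X] [T2Space X] [TotallyDisconnectedSpace X]
    (Φ : DynAction G X) (S : Finset G)
    (hsh : ShadowingProperty Φ (S : Set G)) :
    ∃ P : SubshiftInvSysPkg G,
      P.sys.ML ∧
      (∀ l : P.Idx, IsSFTOver (insert (1 : G) S) (P.sys.Y l)) ∧
      ∃ f : X → ↥P.sys.limitSet, IsConjugacy Φ P.sys.limitDyn f := by
  classical
  refine ⟨{ Idx := PartIdx X, directed := partIdx_directed, sys := theSys Φ S }, ?_, ?_, ?_⟩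
  · -- Mittag-Leffler
    intro l
    obtain ⟨m, h, hkey⟩ := exists_shadowing_index Φ S hsh l
    have sub2 : ∀ (m' : PartIdx X) (hh : l ≤ m'),
        Set.range (codeY Φ S l) ⊆ Set.range ((theSys Φ S).bond hh) := by
      rintro m' hh _ ⟨x, rfl⟩
      exact ⟨codeY Φ S m' x, bond_codeY Φ S hh x⟩
    have sub1 : Set.range ((theSys Φ S).bond h) ⊆ Set.range (codeY Φ S l) := by
      rintro _ ⟨c, rfl⟩
      obtain ⟨z, hz⟩ := hkey c.1 c.2
      exact ⟨z, (Subtype.ext (funext fun g => hz g)).symm⟩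
    refine ⟨m, h, ?_⟩
    intro n h'
    have e1 : Set.range ((theSys Φ S).bond h) = Set.range (codeY Φ S l) :=
      le_antisymm sub1 (sub2 m h)
    rw [e1]
    apply le_antisymm
    · rintro _ ⟨c, rfl⟩
      rw [← (theSys Φ S).bond_comp h h' c]
      exact sub1 ⟨(theSys Φ S).bond h' c, rfl⟩
    · exact sub2 n (h.trans h')
  · -- each term is an SFT over insert 1 S
    intro l
    exact Ysft_isSFT Φ S l.1
  · -- the conjugacy
    refine ⟨fun x => ⟨fun l => codeY Φ S l x, fun l m h => bond_codeY Φ S h x⟩, ?_, ?_, ?_⟩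
    · refine Continuous.subtype_mk (continuous_pi fun l => ?_) _
      exact Continuous.subtype_mk (codefn_continuous Φ l) _
    · constructor
      · -- injective
        intro x y hxy
        by_contra hne
        obtain ⟨l, C, hC, hCc, hxC, hyC⟩ := exists_separating_partIdx hne
        have h1 : codefn Φ l x 1 = codefn Φ l y 1 := by
          have := congrArg (fun w => ((w.1 l).1 : G → Letter l.1) 1) hxy
          exact this
        have hx1 : (codefn Φ l x 1).1 = C := by
          show (part l.1 l.2.2.1 (Φ.act 1 x)).1 = C
          rw [Φ.act_one]
          exact part_eq l.2 hC hxC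
        have hy1 : (codefn Φ l y 1).1 = Cᶜ := by
          show (part l.1 l.2.2.1 (Φ.act 1 y)).1 = Cᶜ
          rw [Φ.act_one]
          exact part_eq l.2 hCc hyC
        have hCC : C = Cᶜ := hx1.symm.trans (Eq.trans (congrArg Subtype.val h1) hy1)
        have hxCc : x ∈ Cᶜ := by rw [← hCC]; exact hxC
        exact hxCc hxC
      · -- surjective
        intro y
        set K : PartIdx X → Set X :=
          fun l => ⋂ g : G, (Φ.act g) ⁻¹' (((y.1 l).1 g).1) with hK
        have hmono : ∀ {l m : PartIdx X}, l ≤ m → K m ⊆ K l := by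
          intro l m h x hx
          have hb : (theSys Φ S).bond h (y.1 m) = y.1 l := y.2 l m h
          refine Set.mem_iInter.mpr fun g => ?_
          have hg : (y.1 l).1 g = upLetter h ((y.1 m).1 g) := by
            rw [← hb]; rfl
          rw [Set.mem_preimage, hg]
          exact subset_upLetter h _ (Set.mem_iInter.mp hx g)
        have hcl : ∀ l, IsClosed (K l) := by
          intro l
          refine isClosed_iInter fun g => IsClosed.preimage (Φ.continuous_act g) ?_
          exact ((l.2.1 _ ((y.1 l).1 g).2).1).isClosed
        have hne : ∀ l, (K l).Nonempty := by
          intro l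
          obtain ⟨m, h, hkey⟩ := exists_shadowing_index Φ S hsh l
          obtain ⟨z, hz⟩ := hkey (y.1 m).1 (y.1 m).2
          have hb : (theSys Φ S).bond h (y.1 m) = y.1 l := y.2 l m h
          refine ⟨z, Set.mem_iInter.mpr fun g => ?_⟩
          have hg : (y.1 l).1 g = upLetter h ((y.1 m).1 g) := by
            rw [← hb]; rfl
          rw [Set.mem_preimage, hg, hz g]
          exact mem_part _ _ _
        have hdir : Directed (· ⊇ ·) K := by
          intro l m
          obtain ⟨n, h1, h2⟩ := partIdx_directed.directed l m
          exact ⟨n, hmono h1, hmono h2⟩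
        obtain ⟨x, hx⟩ := IsCompact.nonempty_iInter_of_directed_nonempty_isCompact_isClosed
          K hdir hne (fun l => (hcl l).isCompact) hcl
        refine ⟨x, ?_⟩
        apply Subtype.ext
        funext l
        apply Subtype.ext
        funext g
        have hxl : x ∈ K l := Set.mem_iInter.mp hx l
        have : Φ.act g x ∈ (((y.1 l).1 g).1) := Set.mem_iInter.mp hxl g
        exact Letter.ext (part_eq l.2 ((y.1 l).1 g).2 this)
    · -- equivariant
      intro g x
      apply Subtype.ext
      funext l
      apply Subtype.ext
      funext k
      show part l.1 l.2.2.1 (Φ.act k (Φ.act g x)) = part l.1 l.2.2.1 (Φ.act (k * g) x)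
      exact congrArg (part l.1 l.2.2.1) (Φ.act_mul k g x).symm
end

section
/- Let S be a subset of a countable discrete group G. Suppose the dynamical system (X, G, Φ) is conjugate to the inverse limit of an inverse system (φ_λ^η, (X_λ, G, Φ^λ)) of dynamical systems satisfying the Mittag-Leffler condition. If Φ^λ has the S-shadowing property for each λ ∈ Λ, then Φ has the S-shadowing property. -/
open Set

universe u

/-! ### Abstract inverse systems of dynamical systems -/

/-- An inverse system of dynamical systems of the group `G` over the index `Λ`. -/
structure InvSysDS (G : Type u) [Group G] (Λ : Type u) [Preorder Λ] where
  X : Λ → Type u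
  [topo : ∀ l, TopologicalSpace (X l)]
  [cpt : ∀ l, CompactSpace (X l)]
  [t2 : ∀ l, T2Space (X l)]
  dyn : ∀ l, DynAction G (X l)
  bond : ∀ {l m : Λ}, l ≤ m → X m → X l
  bond_cont : ∀ {l m : Λ} (h : l ≤ m), Continuous (bond h)
  bond_refl : ∀ (l : Λ) (x : X l), bond (le_refl l) x = x
  bond_comp : ∀ {l m n : Λ} (h1 : l ≤ m) (h2 : m ≤ n) (x : X n),
    bond h1 (bond h2 x) = bond (h1.trans h2) x
  bond_equivariant : ∀ {l m : Λ} (h : l ≤ m) (g : G) (x : X m),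
    (dyn l).act g (bond h x) = bond h ((dyn m).act g x)

namespace InvSysDS

variable {G Λ : Type u} [Group G] [Preorder Λ]

instance (𝒮 : InvSysDS G Λ) (l : Λ) : TopologicalSpace (𝒮.X l) := 𝒮.topo l
instance (𝒮 : InvSysDS G Λ) (l : Λ) : CompactSpace (𝒮.X l) := 𝒮.cpt l
instance (𝒮 : InvSysDS G Λ) (l : Λ) : T2Space (𝒮.X l) := 𝒮.t2 l

/-- The inverse limit of the system, as a subset of the product. -/
def limitSet (𝒮 : InvSysDS G Λ) : Set (∀ l : Λ, 𝒮.X l) :=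
  {x | ∀ (l m : Λ) (h : l ≤ m), 𝒮.bond h (x m) = x l}

lemma act_mem_limitSet (𝒮 : InvSysDS G Λ) (g : G) (x : ∀ l : Λ, 𝒮.X l)
    (hx : x ∈ 𝒮.limitSet) : (fun l => (𝒮.dyn l).act g (x l)) ∈ 𝒮.limitSet := by
  intro l m h
  rw [← 𝒮.bond_equivariant h g (x m), hx l m h]

/-- The induced `G`-action `Φ*` on the inverse limit. -/
def limitDyn (𝒮 : InvSysDS G Λ) : DynAction G ↥𝒮.limitSet where
  act g x := ⟨fun l => (𝒮.dyn l).act g (x.1 l), 𝒮.act_mem_limitSet g x.1 x.2⟩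
  continuous_act g := Continuous.subtype_mk
    (continuous_pi fun l => ((𝒮.dyn l).continuous_act g).comp
      ((continuous_apply l).comp continuous_subtype_val)) _
  act_one x := by
    apply Subtype.ext; funext l; exact (𝒮.dyn l).act_one (x.1 l)
  act_mul g g' x := by
    apply Subtype.ext; funext l; exact (𝒮.dyn l).act_mul g g' (x.1 l)

/-- The Mittag-Leffler condition. -/
def ML (𝒮 : InvSysDS G Λ) : Prop :=
  ∀ l : Λ, ∃ m : Λ, ∃ h : l ≤ m, ∀ (n : Λ) (h' : m ≤ n),
    Set.range (𝒮.bond (h.trans h')) = Set.range (𝒮.bond h)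

end InvSysDS

/-- **Theorem 3.4.** Shadowing passes to inverse limits of ML inverse systems: if
`(X,G,Φ)` is conjugate to the inverse limit of an ML inverse system all of whose terms
have the `S`-shadowing property, then `Φ` has the `S`-shadowing property. -/
theorem shadowing_of_conjugate_ML_invlim
    {G X : Type} [Group G] [Countable G] [TopologicalSpace X]
    [CompactSpace X] [T2Space X]
    (Φ : DynAction G X) (S : Set G)
    {Λ : Type} [Preorder Λ] [IsDirected Λ (· ≤ ·)]
    (𝒮 : InvSysDS G Λ) (hML : 𝒮.ML)
    (hterms : ∀ l : Λ, ShadowingProperty (𝒮.dyn l) S)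
    (f : X → ↥𝒮.limitSet) (hf : IsConjugacy Φ 𝒮.limitDyn f) :
    ShadowingProperty Φ S := by
  classical
  obtain ⟨hfc, hfb, hfe⟩ := hf
  intro 𝒰 h𝒰
  rcases isEmpty_or_nonempty X with hX | hX
  · exact ⟨𝒰, h𝒰, fun x _ => (IsEmpty.false (x 1)).elim⟩
  rcases isEmpty_or_nonempty Λ with hΛ | hΛ
  · refine ⟨𝒰, h𝒰, fun x _ => ⟨x 1, fun g => ?_⟩⟩
    have hxg : x g ∈ ⋃₀ (𝒰 : Set (Set X)) := h𝒰.2.symm ▸ mem_univ (x g)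
    obtain ⟨U, hU, hxU⟩ := hxg
    have hsingle : Φ.act g (x 1) = x g :=
      hfb.1 (Subtype.ext (funext fun l => (IsEmpty.false l).elim))
    exact ⟨U, hU, hsingle ▸ hxU, hxU⟩
  -- main case
  set q : X → ∀ a, 𝒮.X a := fun x => (f x).1 with hqdef
  have hqc : Continuous q := continuous_subtype_val.comp hfc
  have hqinj : Function.Injective q := fun a b hab => hfb.1 (Subtype.ext hab)
  have hNE : ∀ a, Nonempty (𝒮.X a) := fun a => ⟨q (Classical.arbitrary X) a⟩
  have hqlim : ∀ (x : X) (a b : Λ) (hab : a ≤ b), 𝒮.bond hab (q x b) = q x a :=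
    fun x a b hab => (f x).2 a b hab
  have hqeq : ∀ (g : G) (x : X) (a : Λ), q (Φ.act g x) a = (𝒮.dyn a).act g (q x a) := by
    intro g x a
    have h1 := hfe g x
    calc q (Φ.act g x) a = (f (Φ.act g x)).1 a := rfl
    _ = ((𝒮.limitDyn).act g (f x)).1 a := by rw [h1]
    _ = (𝒮.dyn a).act g (q x a) := rfl
  -- Step 1: pointwise basis
  have key1 : ∀ (x : X) (U : Set X), IsOpen U → x ∈ U →
      ∃ (a : Λ) (W : Set (𝒮.X a)), IsOpen W ∧ q x a ∈ W ∧ {x' : X | q x' a ∈ W} ⊆ U := by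
    intro x U hUo hxU
    have hKc : IsCompact (q '' Uᶜ) := (hUo.isClosed_compl.isCompact).image hqc
    have hKcl : IsClosed (q '' Uᶜ) := hKc.isClosed
    have hyn : q x ∈ (q '' Uᶜ)ᶜ := by
      intro hy
      obtain ⟨x', hx', he⟩ := hy
      exact hx' (hqinj he ▸ hxU)
    obtain ⟨I, u, hu, hsub⟩ := isOpen_pi_iff.1 hKcl.isOpen_compl (q x) hyn
    obtain ⟨n, hn⟩ := I.exists_le
    refine ⟨n, ⋂ i : I, 𝒮.bond (hn i i.2) ⁻¹' u i, ?_, ?_, ?_⟩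
    · exact isOpen_iInter_of_finite fun i => (hu i i.2).1.preimage (𝒮.bond_cont _)
    · refine Set.mem_iInter.2 fun i => ?_
      show 𝒮.bond _ (q x n) ∈ u i
      rw [hqlim x i n (hn i i.2)]
      exact (hu i i.2).2
    · intro x' hx'
      by_contra hx'U
      have hpi : q x' ∈ (I : Set Λ).pi u := by
        intro i hi
        have h2 := Set.mem_iInter.1 hx' ⟨i, hi⟩
        rw [Set.mem_preimage, hqlim x' i n (hn i hi)] at h2
        exact h2
      exact (hsub hpi) ⟨x', hx'U, rfl⟩
  -- Step 2: cover refinement at a single level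
  have hmemU : ∀ x : X, ∃ U ∈ 𝒰, x ∈ U := by
    intro x
    have hx : x ∈ ⋃₀ (𝒰 : Set (Set X)) := h𝒰.2.symm ▸ mem_univ x
    obtain ⟨U, hU, hxU⟩ := hx
    exact ⟨U, hU, hxU⟩
  have hpt : ∀ x : X, ∃ (a : Λ) (W : Set (𝒮.X a)) (U : Set X),
      U ∈ 𝒰 ∧ IsOpen W ∧ q x a ∈ W ∧ {x' : X | q x' a ∈ W} ⊆ U := by
    intro x
    obtain ⟨U, hU, hxU⟩ := hmemU x
    obtain ⟨a, W, hWo, hmem, hsub⟩ := key1 x U (h𝒰.1 U hU) hxU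
    exact ⟨a, W, U, hU, hWo, hmem, hsub⟩
  choose av Wv Uv hUv hWov hWmem hWsub using hpt
  have hcov : (univ : Set X) ⊆ ⋃ x : X, {x' : X | q x' (av x) ∈ Wv x} :=
    fun x _ => Set.mem_iUnion.2 ⟨x, hWmem x⟩
  obtain ⟨t, ht⟩ := isCompact_univ.elim_finite_subcover
    (fun x : X => {x' : X | q x' (av x) ∈ Wv x})
    (fun x => (hWov x).preimage ((continuous_apply (av x)).comp hqc)) hcov
  obtain ⟨l, hl⟩ := (t.image av).exists_le
  have hl' : ∀ x ∈ t, av x ≤ l := fun x hx => hl _ (Finset.mem_image_of_mem _ hx)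
  obtain ⟨U₀, hU₀, _⟩ := hmemU (Classical.arbitrary X)
  set 𝒲 : Finset (Set (𝒮.X l)) :=
    (t.image (fun x0 => if hx0 : av x0 ≤ l then 𝒮.bond hx0 ⁻¹' Wv x0 else (∅ : Set (𝒮.X l))))
      ∪ {(Set.range (fun x => q x l))ᶜ} with h𝒲def
  have h𝒲foc : IsFOC 𝒲 := by
    constructor
    · intro W' hW'
      rcases Finset.mem_union.1 hW' with hW' | hW'
      · obtain ⟨x0, _, rfl⟩ := Finset.mem_image.1 hW'
        split_ifs with hx0
        · exact (hWov x0).preimage (𝒮.bond_cont _)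
        · exact isOpen_empty
      · rw [Finset.mem_singleton.1 hW']
        exact isOpen_compl_iff.2 (isCompact_range ((continuous_apply l).comp hqc)).isClosed
    · refine Set.eq_univ_of_forall fun y => ?_
      by_cases hy : y ∈ Set.range (fun x => q x l)
      · obtain ⟨x', rfl⟩ := hy
        have hx' : x' ∈ ⋃ x ∈ t, {x'' : X | q x'' (av x) ∈ Wv x} := ht (mem_univ x')
        obtain ⟨x0, hx0t, hx0m⟩ := Set.mem_iUnion₂.1 hx'
        refine ⟨if hx0 : av x0 ≤ l then 𝒮.bond hx0 ⁻¹' Wv x0 else ∅, ?_, ?_⟩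
        · exact Finset.mem_coe.2 (Finset.mem_union_left _ (Finset.mem_image_of_mem _ hx0t))
        · rw [dif_pos (hl' x0 hx0t)]
          show 𝒮.bond _ (q x' l) ∈ Wv x0
          rw [hqlim x' (av x0) l (hl' x0 hx0t)]
          exact hx0m
      · exact ⟨(Set.range (fun x => q x l))ᶜ,
          Finset.mem_coe.2 (Finset.mem_union_right _ (Finset.mem_singleton_self _)), hy⟩
  have hrefine : ∀ W' ∈ 𝒲, ∃ U ∈ 𝒰, {x' : X | q x' l ∈ W'} ⊆ U := by
    intro W' hW'
    rcases Finset.mem_union.1 hW' with hW' | hW'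
    · obtain ⟨x0, hx0t, rfl⟩ := Finset.mem_image.1 hW'
      split_ifs with hx0
      · refine ⟨Uv x0, hUv x0, fun x' hx' => hWsub x0 ?_⟩
        show q x' (av x0) ∈ Wv x0
        rw [← hqlim x' (av x0) l hx0]
        exact hx'
      · exact ⟨U₀, hU₀, fun x' hx' => absurd hx' (notMem_empty _)⟩
    · rw [Finset.mem_singleton.1 hW']
      exact ⟨U₀, hU₀, fun x' hx' => absurd ⟨x', rfl⟩ hx'⟩
  -- Step 3: ML
  obtain ⟨m, h, hstab⟩ := hML l
  have hlift : ∀ zm : 𝒮.X m, ∃ zz, zz ∈ 𝒮.limitSet ∧ zz l = 𝒮.bond h zm := by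
    intro zm
    by_contra hcon
    push_neg at hcon
    set D : Set (∀ a, 𝒮.X a) := {w | w l = 𝒮.bond h zm} with hDdef
    have hDc : IsClosed D := isClosed_eq (continuous_apply l) continuous_const
    set Z : (Σ _a : Λ, Σ _b : Λ, PLift (_a ≤ _b)) → Set (∀ a, 𝒮.X a) :=
      fun i => {w | 𝒮.bond i.2.2.down (w i.2.1) = w i.1} with hZdef
    have hZc : ∀ i, IsClosed (Z i) := fun i =>
      isClosed_eq ((𝒮.bond_cont _).comp (continuous_apply _)) (continuous_apply _)
    have hemp : D ∩ ⋂ i, Z i = ∅ := by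
      ext w
      simp only [Set.mem_inter_iff, Set.mem_iInter, Set.mem_empty_iff_false, iff_false, not_and]
      intro hwD hwZ
      exact hcon w (fun a b hab => hwZ ⟨a, b, ⟨hab⟩⟩) hwD
    obtain ⟨tt, htt⟩ := (hDc.isCompact).elim_finite_subfamily_closed Z hZc hemp
    obtain ⟨n, hn⟩ := (tt.image (fun i => i.1) ∪ tt.image (fun i => i.2.1) ∪ {m}).exists_le
    have hmn : m ≤ n := hn m (Finset.mem_union_right _ (Finset.mem_singleton_self _))
    have hrng : 𝒮.bond h zm ∈ Set.range (𝒮.bond (h.trans hmn)) := by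
      rw [hstab n hmn]; exact ⟨zm, rfl⟩
    obtain ⟨xn, hxn⟩ := hrng
    set w : ∀ a, 𝒮.X a := fun a => if ha : a ≤ n then 𝒮.bond ha xn else (hNE a).some with hwdef
    have hwmem : ∀ (a) (ha : a ≤ n), w a = 𝒮.bond ha xn := fun a ha => dif_pos ha
    have hwin : w ∈ D ∩ ⋂ i ∈ tt, Z i := by
      constructor
      · show w l = 𝒮.bond h zm
        rw [hwmem l (h.trans hmn)]
        exact hxn
      · refine Set.mem_iInter₂.2 fun i hi => ?_
        have hb : i.2.1 ≤ n := hn _ (Finset.mem_union_left _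
          (Finset.mem_union_right _ (Finset.mem_image_of_mem _ hi)))
        have ha : i.1 ≤ n := hn _ (Finset.mem_union_left _
          (Finset.mem_union_left _ (Finset.mem_image_of_mem _ hi)))
        show 𝒮.bond i.2.2.down (w i.2.1) = w i.1
        rw [hwmem _ hb, hwmem _ ha, 𝒮.bond_comp]
    rw [htt] at hwin
    exact hwin
  -- Step 4: pull the cover back to level m and apply shadowing there
  set 𝒲m : Finset (Set (𝒮.X m)) := 𝒲.image (fun W' => 𝒮.bond h ⁻¹' W') with h𝒲mdef
  have h𝒲mfoc : IsFOC 𝒲m := by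
    constructor
    · intro V hV
      obtain ⟨W', hW', rfl⟩ := Finset.mem_image.1 hV
      exact (h𝒲foc.1 W' hW').preimage (𝒮.bond_cont _)
    · refine Set.eq_univ_of_forall fun y => ?_
      have hy : 𝒮.bond h y ∈ ⋃₀ (𝒲 : Set (Set (𝒮.X l))) := h𝒲foc.2.symm ▸ mem_univ _
      obtain ⟨W', hW', hyW'⟩ := hy
      exact ⟨𝒮.bond h ⁻¹' W', Finset.mem_coe.2 (Finset.mem_image_of_mem _ hW'), hyW'⟩
  obtain ⟨𝒱m, h𝒱m, hshad⟩ := hterms m 𝒲m h𝒲mfoc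
  refine ⟨𝒱m.image (fun V => {x : X | q x m ∈ V}), ?_, ?_⟩
  · constructor
    · intro V hV
      obtain ⟨V0, hV0, rfl⟩ := Finset.mem_image.1 hV
      exact (h𝒱m.1 V0 hV0).preimage ((continuous_apply m).comp hqc)
    · refine Set.eq_univ_of_forall fun x => ?_
      have hx : q x m ∈ ⋃₀ (𝒱m : Set (Set (𝒮.X m))) := h𝒱m.2.symm ▸ mem_univ _
      obtain ⟨V0, hV0, hxV0⟩ := hx
      exact ⟨{x' : X | q x' m ∈ V0}, Finset.mem_coe.2 (Finset.mem_image_of_mem _ hV0), hxV0⟩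
  · rintro x ⟨Ux, hUx1, hUx2⟩
    have hV : ∀ g : G, ∃ V ∈ 𝒱m, {x' : X | q x' m ∈ V} = Ux g := by
      intro g
      obtain ⟨V, hVm, hVe⟩ := Finset.mem_image.1 (hUx1 g)
      exact ⟨V, hVm, hVe⟩
    choose V hVmem hVeq using hV
    have hpo : IsPseudoOrbit (𝒮.dyn m) S 𝒱m (fun g => q (x g) m) := by
      refine ⟨V, hVmem, fun g s hs => ?_⟩
      obtain ⟨h1, h2⟩ := hUx2 g s hs
      rw [← hVeq (s * g)] at h1 h2
      refine ⟨h1, ?_⟩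
      rw [← hqeq s (x g) m]
      exact h2
    obtain ⟨zm, hzm⟩ := hshad (fun g => q (x g) m) hpo
    obtain ⟨zz, hzzmem, hzzl⟩ := hlift zm
    obtain ⟨z, hz⟩ := hfb.2 ⟨zz, hzzmem⟩
    refine ⟨z, fun g => ?_⟩
    obtain ⟨V', hV'W, hzv, hxv⟩ := hzm g
    obtain ⟨W', hW'𝒲, rfl⟩ := Finset.mem_image.1 hV'W
    obtain ⟨U, hU𝒰, hUsub⟩ := hrefine W' hW'𝒲
    refine ⟨U, hU𝒰, hUsub ?_, hUsub ?_⟩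
    · show q (Φ.act g z) l ∈ W'
      have h1 : q (Φ.act g z) l = (𝒮.dyn l).act g (q z l) := hqeq g z l
      have h2 : q z l = 𝒮.bond h zm := by
        have : q z = zz := congrArg Subtype.val hz
        rw [this]
        exact hzzl
      rw [h1, h2, 𝒮.bond_equivariant h g zm]
      exact hzv
    · show q (x g) l ∈ W'
      rw [← hqlim (x g) l m h]
      exact hxv
end

section
/- Let (X, G, Φ) be a dynamical system where X is a compact metric space, and let S be a finite subset of G. If Φ has the metric S-shadowing property, then there exists an inverse system (φ_n^{n+1}, (X_n, G, σ)) indexed by the natural numbers, whose terms X_n are shifts of finite type over S ∪ {e_G} with the shift G-action, such that (X, G, Φ) is a factor of the inverse limit (lim⟵{φ_n^{n+1}, X_n}, G, σ*). -/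
open Set
open scoped Classical

universe u

/-! ### Metric shadowing -/

/-- `{x g}` is an `(S,δ)`-pseudo-orbit for the metric `d`. -/
def IsMetricPseudoOrbit {G X : Type u} [Group G] [MetricSpace X]
    (Φ : DynAction G X) (S : Set G) (δ : ℝ) (x : G → X) : Prop :=
  ∀ g : G, ∀ s ∈ S, dist (Φ.act s (x g)) (x (s * g)) < δ

/-- The metric `S`-shadowing property. -/
def MetricShadowing {G X : Type u} [Group G] [MetricSpace X]
    (Φ : DynAction G X) (S : Set G) : Prop :=
  ∀ ε : ℝ, 0 < ε → ∃ δ : ℝ, 0 < δ ∧ ∀ x : G → X,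
    IsMetricPseudoOrbit Φ S δ x → ∃ z : X, ∀ g : G, dist (Φ.act g z) (x g) < ε

section PartA
variable {X : Type} [MetricSpace X] [CompactSpace X]

lemma exists_net (rr : ℝ) (h : 0 < rr) :
    ∃ c : X → X, (Set.range c).Finite ∧ ∀ x, dist x (c x) < rr := by
  obtain ⟨t, -, htf, hcov⟩ := finite_cover_balls_of_compact (isCompact_univ (X := X)) h
  have hx : ∀ x : X, ∃ y, y ∈ t ∧ dist x y < rr := by
    intro x
    have := hcov (Set.mem_univ x)
    simp only [Set.mem_iUnion, Metric.mem_ball] at this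
    obtain ⟨y, hy1, hy2⟩ := this
    exact ⟨y, hy1, hy2⟩
  choose c hc1 hc2 using hx
  exact ⟨c, htf.subset (Set.range_subset_iff.mpr hc1), hc2⟩

noncomputable def cmap (rr : ℝ) (h : 0 < rr) : X → X := (exists_net rr h).choose

lemma cmap_finite (rr : ℝ) (h : 0 < rr) : (Set.range (cmap (X := X) rr h)).Finite :=
  (exists_net rr h).choose_spec.1

lemma cmap_dist (rr : ℝ) (h : 0 < rr) (x : X) : dist x (cmap rr h x) < rr :=
  (exists_net rr h).choose_spec.2 x

variable [Nonempty X]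

noncomputable def psi (p : X → X) (rr : ℝ) (h : 0 < rr) : X × X → X :=
  fun z => if hx : ∃ y, cmap rr h y = z.1 ∧ p y = z.2 then hx.choose else Classical.arbitrary X

noncomputable def qstep (p : X → X) (rr : ℝ) (h : 0 < rr) : X → X :=
  fun x => psi p rr h (cmap rr h x, p x)

lemma qstep_spec (p : X → X) (rr : ℝ) (h : 0 < rr) (x : X) :
    cmap rr h (qstep p rr h x) = cmap rr h x ∧ p (qstep p rr h x) = p x := by
  have hx : ∃ y, cmap rr h y = cmap rr h x ∧ p y = p x := ⟨x, rfl, rfl⟩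
  have hq : qstep p rr h x = hx.choose := by
    simp only [qstep, psi]
    exact dif_pos hx
  rw [hq]; exact hx.choose_spec

lemma qstep_congr (p : X → X) (rr : ℝ) (h : 0 < rr) {x x' : X}
    (h1 : cmap rr h x = cmap rr h x') (h2 : p x = p x') :
    qstep p rr h x = qstep p rr h x' := by
  unfold qstep; rw [h1, h2]

lemma qstep_dist (p : X → X) (rr : ℝ) (h : 0 < rr) (x : X) :
    dist (qstep p rr h x) x < 2 * rr := by
  have h1 := (qstep_spec p rr h x).1
  calc dist (qstep p rr h x) x
      ≤ dist (qstep p rr h x) (cmap rr h (qstep p rr h x))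
        + dist (cmap rr h (qstep p rr h x)) x := dist_triangle _ _ _
    _ < rr + rr := by
        refine add_lt_add (cmap_dist rr h _) ?_
        rw [h1, dist_comm]; exact cmap_dist rr h x
    _ = 2 * rr := by ring

lemma qstep_idem (p : X → X) (rr : ℝ) (h : 0 < rr) (x : X) :
    qstep p rr h (qstep p rr h x) = qstep p rr h x :=
  qstep_congr p rr h (qstep_spec p rr h x).1 (qstep_spec p rr h x).2

lemma qstep_finite (p : X → X) (rr : ℝ) (h : 0 < rr) (hp : (Set.range p).Finite) :
    (Set.range (qstep p rr h)).Finite := by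
  refine (((cmap_finite rr h).prod hp).image (psi p rr h)).subset ?_
  rintro _ ⟨x, rfl⟩
  exact ⟨(cmap rr h x, p x), ⟨⟨x, rfl⟩, ⟨x, rfl⟩⟩, rfl⟩

end PartA

section PartB
variable {G X : Type} [Group G] [MetricSpace X] [CompactSpace X]
variable (Φ : DynAction G X) (S : Finset G)

lemma unif_aux (η : ℝ) (hη : 0 < η) :
    ∃ r : ℝ, 0 < r ∧ ∀ s ∈ S, ∀ a b : X, dist a b < r →
      dist (Φ.act s a) (Φ.act s b) < η := by
  classical
  induction S using Finset.induction with
  | empty => exact ⟨1, one_pos, by simp⟩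
  | @insert s T hsT ih =>
    obtain ⟨r₂, hr₂, hT⟩ := ih
    have uc : UniformContinuous (Φ.act s) :=
      CompactSpace.uniformContinuous_of_continuous (Φ.continuous_act s)
    obtain ⟨r₁, hr₁, h₁⟩ := Metric.uniformContinuous_iff.mp uc η hη
    refine ⟨min r₁ r₂, lt_min hr₁ hr₂, ?_⟩
    intro u hu a b hab
    rcases Finset.mem_insert.mp hu with rfl | hu
    · exact h₁ (lt_of_lt_of_le hab (min_le_left _ _))
    · exact hT u hu a b (lt_of_lt_of_le hab (min_le_right _ _))

variable (hsh : MetricShadowing Φ (S : Set G))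

noncomputable def shD (n : ℕ) : ℝ := (hsh ((1/2) ^ n) (by positivity)).choose

lemma shD_pos (n : ℕ) : 0 < shD Φ S hsh n := (hsh ((1/2) ^ n) (by positivity)).choose_spec.1

lemma shD_shadow (n : ℕ) : ∀ x : G → X, IsMetricPseudoOrbit Φ (S : Set G) (shD Φ S hsh n) x →
    ∃ z, ∀ g, dist (Φ.act g z) (x g) < (1/2) ^ n :=
  (hsh ((1/2) ^ n) (by positivity)).choose_spec.2

noncomputable def urad (d : ℝ) : ℝ :=
  if h : 0 < d then (unif_aux Φ S (d/4) (by positivity)).choose else 1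

lemma urad_pos (d : ℝ) : 0 < urad Φ S d := by
  unfold urad; split
  · exact (unif_aux Φ S _ (by positivity)).choose_spec.1
  · exact one_pos

lemma urad_spec {d : ℝ} (hd : 0 < d) : ∀ s ∈ S, ∀ a b : X, dist a b < urad Φ S d →
    dist (Φ.act s a) (Φ.act s b) < d / 4 := by
  unfold urad; rw [dif_pos hd]
  exact (unif_aux Φ S (d/4) (by positivity)).choose_spec.2

noncomputable def dr : ℕ → ℝ × ℝ
  | 0 => (shD Φ S hsh 0 / 2,
      min (urad Φ S (shD Φ S hsh 0 / 2) / 4) (min (shD Φ S hsh 0 / 2 / 16) 1))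
  | n+1 => (min (shD Φ S hsh (n+1) / 2) ((dr n).1 / 4),
      min (urad Φ S (min (shD Φ S hsh (n+1) / 2) ((dr n).1 / 4)) / 4)
          (min (min (shD Φ S hsh (n+1) / 2) ((dr n).1 / 4) / 16) ((dr n).2 / 2)))

noncomputable def dl (n : ℕ) : ℝ := (dr Φ S hsh n).1
noncomputable def rl (n : ℕ) : ℝ := (dr Φ S hsh n).2

lemma dl_pos (n : ℕ) : 0 < dl Φ S hsh n := by
  induction n with
  | zero => simpa [dl, dr] using half_pos (shD_pos Φ S hsh 0)
  | succ n ih =>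
    have h2 : 0 < (dr Φ S hsh n).1 / 4 := div_pos ih (by norm_num)
    have : 0 < min (shD Φ S hsh (n+1) / 2) ((dr Φ S hsh n).1 / 4) :=
      lt_min (half_pos (shD_pos Φ S hsh (n+1))) h2
    simpa [dl, dr] using this

lemma dl_le_shD (n : ℕ) : dl Φ S hsh n ≤ shD Φ S hsh n / 2 := by
  cases n with
  | zero => simp [dl, dr]
  | succ n => simpa [dl, dr] using min_le_left _ _

lemma dl_lt_shD (n : ℕ) : dl Φ S hsh n < shD Φ S hsh n :=
  lt_of_le_of_lt (dl_le_shD Φ S hsh n) (by linarith [shD_pos Φ S hsh n])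

lemma dl_succ (n : ℕ) : dl Φ S hsh (n+1) ≤ dl Φ S hsh n / 4 := by
  simpa [dl, dr] using min_le_right _ _

lemma rl_urad (n : ℕ) : rl Φ S hsh n ≤ urad Φ S (dl Φ S hsh n) / 4 := by
  cases n with
  | zero => simpa [rl, dl, dr] using min_le_left _ _
  | succ n => simpa [rl, dl, dr] using min_le_left _ _

lemma rl_dl (n : ℕ) : rl Φ S hsh n ≤ dl Φ S hsh n / 16 := by
  cases n with
  | zero => simpa [rl, dl, dr] using le_trans (min_le_right _ _) (min_le_left _ _)
  | succ n => simpa [rl, dl, dr] using le_trans (min_le_right _ _) (min_le_left _ _)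

lemma rl_succ (n : ℕ) : rl Φ S hsh (n+1) ≤ rl Φ S hsh n / 2 := by
  simpa [rl, dr] using le_trans (min_le_right _ _) (min_le_right _ _)

lemma rl_pos (n : ℕ) : 0 < rl Φ S hsh n := by
  induction n with
  | zero =>
    have h1 := urad_pos Φ S (shD Φ S hsh 0 / 2)
    have h2 := shD_pos Φ S hsh 0
    have : 0 < min (urad Φ S (shD Φ S hsh 0 / 2) / 4) (min (shD Φ S hsh 0 / 2 / 16) 1) :=
      lt_min (by linarith) (lt_min (by linarith) one_pos)
    simpa [rl, dr] using this
  | succ n ih =>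
    have h1 := urad_pos Φ S (min (shD Φ S hsh (n+1) / 2) ((dr Φ S hsh n).1 / 4))
    have h2 := shD_pos Φ S hsh (n+1)
    have h3 : 0 < (dr Φ S hsh n).1 := dl_pos Φ S hsh n
    have h4 : 0 < (dr Φ S hsh n).2 := ih
    have : 0 < min (urad Φ S (min (shD Φ S hsh (n+1) / 2) ((dr Φ S hsh n).1 / 4)) / 4)
        (min (min (shD Φ S hsh (n+1) / 2) ((dr Φ S hsh n).1 / 4) / 16) ((dr Φ S hsh n).2 / 2)) := by
      refine lt_min (by linarith) (lt_min ?_ (by linarith))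
      refine div_pos (lt_min (by linarith) (by linarith)) (by norm_num)
    simpa [rl, dr] using this

lemma rl_le_one (n : ℕ) : rl Φ S hsh n ≤ (1/2 : ℝ) ^ n := by
  induction n with
  | zero =>
    simpa [rl, dr] using le_trans (min_le_right _ _) (min_le_right _ _)
  | succ n ih =>
    have := rl_succ Φ S hsh n
    calc rl Φ S hsh (n+1) ≤ rl Φ S hsh n / 2 := this
    _ ≤ (1/2 : ℝ)^n / 2 := by linarith
    _ = (1/2 : ℝ)^(n+1) := by ring

lemma mod_lemma (n : ℕ) {s : G} (hs : s ∈ S) (a b : X) (hab : dist a b ≤ 2 * rl Φ S hsh n) :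
    dist (Φ.act s a) (Φ.act s b) ≤ dl Φ S hsh n / 4 := by
  have h1 := rl_urad Φ S hsh n
  have h2 := urad_pos Φ S (dl Φ S hsh n)
  have h3 := rl_pos Φ S hsh n
  have : dist a b < urad Φ S (dl Φ S hsh n) := by linarith
  exact (urad_spec Φ S (dl_pos Φ S hsh n) s hs a b this).le

end PartB

section PartC
variable {G X : Type} [Group G] [MetricSpace X] [CompactSpace X] [Nonempty X]
variable (Φ : DynAction G X) (S : Finset G) (hsh : MetricShadowing Φ (S : Set G))

noncomputable def qv : ℕ → X → X
  | 0 => qstep (fun _ => Classical.arbitrary X) (rl Φ S hsh 0) (rl_pos Φ S hsh 0)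
  | n+1 => qstep (qv n) (rl Φ S hsh (n+1)) (rl_pos Φ S hsh (n+1))

lemma qv_finite (n : ℕ) : (Set.range (qv Φ S hsh n)).Finite := by
  induction n with
  | zero =>
    refine qstep_finite _ _ _ ?_
    exact (Set.finite_singleton (Classical.arbitrary X)).subset
      (Set.range_subset_iff.mpr fun _ => rfl)
  | succ n ih => exact qstep_finite _ _ _ ih

lemma qv_dist (n : ℕ) (x : X) : dist (qv Φ S hsh n x) x ≤ 2 * rl Φ S hsh n := by
  cases n with
  | zero => exact (qstep_dist _ _ _ x).le
  | succ n => exact (qstep_dist _ _ _ x).le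

lemma qv_proj (n : ℕ) (x : X) : qv Φ S hsh n (qv Φ S hsh (n+1) x) = qv Φ S hsh n x :=
  (qstep_spec _ _ _ x).2

lemma qv_idem (n : ℕ) (x : X) : qv Φ S hsh n (qv Φ S hsh n x) = qv Φ S hsh n x := by
  cases n with
  | zero => exact qstep_idem _ _ _ x
  | succ n => exact qstep_idem _ _ _ x

lemma qv_coh : ∀ m l, l ≤ m → ∀ x : X, qv Φ S hsh l (qv Φ S hsh m x) = qv Φ S hsh l x := by
  intro m
  induction m with
  | zero =>
    intro l hl x
    interval_cases l
    exact qv_idem Φ S hsh 0 x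
  | succ m ih =>
    intro l hl x
    rcases Nat.lt_succ_iff_lt_or_eq.mp (Nat.lt_succ_of_le hl) with h | rfl
    · have hl' : l ≤ m := Nat.lt_succ_iff.mp h
      calc qv Φ S hsh l (qv Φ S hsh (m+1) x)
          = qv Φ S hsh l (qv Φ S hsh m (qv Φ S hsh (m+1) x)) := (ih l hl' _).symm
        _ = qv Φ S hsh l (qv Φ S hsh m x) := by rw [qv_proj]
        _ = qv Φ S hsh l x := ih l hl' x
    · exact qv_idem Φ S hsh _ x

end PartC

section PartD
variable {G X : Type} [Group G] [MetricSpace X] [CompactSpace X] [Nonempty X]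
variable (Φ : DynAction G X) (S : Finset G) (hsh : MetricShadowing Φ (S : Set G))

@[reducible] noncomputable def Alp (n : ℕ) : Type := ↥(Set.range (qv Φ S hsh n))

lemma alp_finite (n : ℕ) : Finite (Alp Φ S hsh n) := (qv_finite Φ S hsh n).to_subtype

lemma alp_discrete (n : ℕ) : DiscreteTopology (Alp Φ S hsh n) := by
  haveI := alp_finite Φ S hsh n
  infer_instance

def Yset (n : ℕ) : Set (G → Alp Φ S hsh n) :=
  {x | ∀ g : G, ∀ s ∈ S, dist (Φ.act s ((x g : X))) ((x (s * g) : X)) ≤ dl Φ S hsh n}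

lemma Yset_subshift (n : ℕ) : IsSubshift (Yset Φ S hsh n) := by
  constructor
  · have hY : Yset Φ S hsh n = ⋂ (g : G), ⋂ (s : G), ⋂ (_ : s ∈ S),
        (fun x : G → Alp Φ S hsh n => (x g, x (s * g))) ⁻¹'
          {p : Alp Φ S hsh n × Alp Φ S hsh n | dist (Φ.act s (p.1 : X)) ((p.2 : X)) ≤ dl Φ S hsh n} := by
      ext x
      simp only [Yset, Set.mem_setOf_eq, Set.mem_iInter, Set.mem_preimage]
    rw [hY]
    haveI := alp_discrete Φ S hsh n
    refine isClosed_iInter fun g => isClosed_iInter fun s => isClosed_iInter fun hs => ?_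
    exact (isClosed_discrete _).preimage ((continuous_apply g).prodMk (continuous_apply (s * g)))
  · intro g x hx g' s hs
    have := hx (g' * g) s hs
    simpa [shift, mul_assoc] using this

lemma Yset_SFT (n : ℕ) : IsSFTOver (insert (1 : G) S) (Yset Φ S hsh n) := by
  classical
  refine ⟨{P : G → Alp Φ S hsh n |
    ∃ s ∈ S, ¬ dist (Φ.act s ((P 1 : X))) ((P s : X)) ≤ dl Φ S hsh n}, ?_⟩
  ext x
  constructor
  · intro hx g P hP hc
    obtain ⟨s, hs, hd⟩ := hP
    have h1 : x (1 * g) = P 1 := hc 1 (Finset.mem_insert_self _ _)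
    have h2 : x (s * g) = P s := hc s (Finset.mem_insert_of_mem hs)
    rw [one_mul] at h1
    exact hd (by rw [← h1, ← h2]; exact hx g s hs)
  · intro hx g s hs
    by_contra hd
    refine hx g (shift G (Alp Φ S hsh n) g x) ⟨s, hs, ?_⟩ (fun b _ => rfl)
    show ¬ dist (Φ.act s ((x (1 * g) : X))) ((x (s * g) : X)) ≤ dl Φ S hsh n
    rwa [one_mul]

end PartD

section PartE
variable {G X : Type} [Group G] [MetricSpace X] [CompactSpace X] [Nonempty X]
variable (Φ : DynAction G X) (S : Finset G) (hsh : MetricShadowing Φ (S : Set G))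

noncomputable def jA (l : ℕ) : Alp Φ S hsh l :=
  ⟨qv Φ S hsh l (Classical.arbitrary X), ⟨_, rfl⟩⟩

noncomputable def stA (n : ℕ) : Alp Φ S hsh (n+1) → Alp Φ S hsh n :=
  fun a => ⟨qv Φ S hsh n a.1, ⟨a.1, rfl⟩⟩

noncomputable def stF (n : ℕ) : (G → Alp Φ S hsh (n+1)) → (G → Alp Φ S hsh n) :=
  fun x g => stA Φ S hsh n (x g)

lemma stF_mem (n : ℕ) {x : G → Alp Φ S hsh (n+1)} (hx : x ∈ Yset Φ S hsh (n+1)) :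
    stF Φ S hsh n x ∈ Yset Φ S hsh n := by
  intro g s hs
  have h1 : dist (Φ.act s (qv Φ S hsh n ((x g : X)))) (Φ.act s ((x g : X)))
      ≤ dl Φ S hsh n / 4 :=
    mod_lemma Φ S hsh n hs _ _ (qv_dist Φ S hsh n _)
  have h2 : dist (Φ.act s ((x g : X))) ((x (s * g) : X)) ≤ dl Φ S hsh (n+1) := hx g s hs
  have h3 : dist ((x (s * g) : X)) (qv Φ S hsh n ((x (s * g) : X))) ≤ 2 * rl Φ S hsh n := by
    rw [dist_comm]; exact qv_dist Φ S hsh n _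
  have h4 := dl_succ Φ S hsh n
  have h5 := rl_dl Φ S hsh n
  have h6 := dl_pos Φ S hsh n
  calc dist (Φ.act s ((stF Φ S hsh n x g : X))) ((stF Φ S hsh n x (s * g) : X))
      ≤ dist (Φ.act s (qv Φ S hsh n ((x g : X)))) (Φ.act s ((x g : X)))
        + dist (Φ.act s ((x g : X))) ((x (s * g) : X))
        + dist ((x (s * g) : X)) (qv Φ S hsh n ((x (s * g) : X))) := dist_triangle4 _ _ _ _
    _ ≤ dl Φ S hsh n := by linarith

noncomputable def bF (l : ℕ) : (m : ℕ) → (G → Alp Φ S hsh m) → (G → Alp Φ S hsh l)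
  | 0 => fun x => if h : l = 0 then cast (by rw [h]) x else fun _ => jA Φ S hsh l
  | m+1 => fun x =>
      if h : l = m + 1 then cast (by rw [h]) x else bF l m (stF Φ S hsh m x)

lemma bF_self (l : ℕ) (x : G → Alp Φ S hsh l) : bF Φ S hsh l l x = x := by
  cases l with
  | zero => simp [bF]
  | succ l => simp [bF]

lemma bF_step {l m : ℕ} (h : l ≠ m + 1) (x : G → Alp Φ S hsh (m+1)) :
    bF Φ S hsh l (m+1) x = bF Φ S hsh l m (stF Φ S hsh m x) := by
  simp only [bF]; rw [dif_neg h]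

lemma bF_zero {l : ℕ} (h : l ≠ 0) (x : G → Alp Φ S hsh 0) :
    bF Φ S hsh l 0 x = fun _ => jA Φ S hsh l := by
  simp only [bF]; rw [dif_neg h]

lemma bF_mem : ∀ m l, l ≤ m → ∀ x ∈ Yset Φ S hsh m, bF Φ S hsh l m x ∈ Yset Φ S hsh l := by
  intro m
  induction m with
  | zero =>
    intro l hl x hx
    interval_cases l
    rw [bF_self]; exact hx
  | succ m ih =>
    intro l hl x hx
    rcases Nat.eq_or_lt_of_le hl with rfl | h
    · rw [bF_self]; exact hx
    · have hl' : l ≤ m := Nat.lt_succ_iff.mp h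
      rw [bF_step Φ S hsh (by omega)]
      exact ih l hl' _ (stF_mem Φ S hsh m hx)

lemma bF_comp : ∀ n m l, l ≤ m → m ≤ n → ∀ x : G → Alp Φ S hsh n,
    bF Φ S hsh l m (bF Φ S hsh m n x) = bF Φ S hsh l n x := by
  intro n
  induction n with
  | zero =>
    intro m l hlm hmn x
    interval_cases m
    rw [bF_self]
  | succ n ih =>
    intro m l hlm hmn x
    rcases Nat.eq_or_lt_of_le hmn with rfl | h
    · rw [bF_self]
    · have hmn' : m ≤ n := Nat.lt_succ_iff.mp h
      rw [bF_step Φ S hsh (by omega), bF_step Φ S hsh (by omega : l ≠ n + 1)]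
      exact ih m l hlm hmn' _

lemma stF_shift (m : ℕ) (g : G) (x : G → Alp Φ S hsh (m+1)) :
    stF Φ S hsh m (shift G (Alp Φ S hsh (m+1)) g x)
      = shift G (Alp Φ S hsh m) g (stF Φ S hsh m x) := rfl

lemma bF_shift : ∀ m l, l ≤ m → ∀ (g : G) (x : G → Alp Φ S hsh m),
    bF Φ S hsh l m (shift G (Alp Φ S hsh m) g x)
      = shift G (Alp Φ S hsh l) g (bF Φ S hsh l m x) := by
  intro m
  induction m with
  | zero =>
    intro l hl g x
    interval_cases l
    rw [bF_self, bF_self]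
  | succ m ih =>
    intro l hl g x
    rcases Nat.eq_or_lt_of_le hl with rfl | h
    · rw [bF_self, bF_self]
    · have hl' : l ≤ m := Nat.lt_succ_iff.mp h
      rw [bF_step Φ S hsh (by omega), bF_step Φ S hsh (by omega), stF_shift, ih l hl' g]

lemma bF_factor : ∀ m l, ∃ φ : Alp Φ S hsh m → Alp Φ S hsh l,
    ∀ (x : G → Alp Φ S hsh m) (g : G), bF Φ S hsh l m x g = φ (x g) := by
  intro m
  induction m with
  | zero =>
    intro l
    by_cases h : l = 0
    · subst h
      exact ⟨id, fun x g => by rw [bF_self]; rfl⟩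
    · exact ⟨fun _ => jA Φ S hsh l, fun x g => by rw [bF_zero Φ S hsh h]⟩
  | succ m ih =>
    intro l
    by_cases h : l = m + 1
    · subst h
      exact ⟨id, fun x g => by rw [bF_self]; rfl⟩
    · obtain ⟨φ, hφ⟩ := ih l
      exact ⟨φ ∘ stA Φ S hsh m, fun x g => by rw [bF_step Φ S hsh h]; exact hφ _ g⟩

lemma bF_coh : ∀ m l, l ≤ m → ∀ y : G → X,
    bF Φ S hsh l m (fun g => ⟨qv Φ S hsh m (y g), ⟨_, rfl⟩⟩)
      = fun g => (⟨qv Φ S hsh l (y g), ⟨_, rfl⟩⟩ : Alp Φ S hsh l) := by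
  intro m
  induction m with
  | zero =>
    intro l hl y
    interval_cases l
    rw [bF_self]
  | succ m ih =>
    intro l hl y
    rcases Nat.eq_or_lt_of_le hl with rfl | h
    · rw [bF_self]
    · have hl' : l ≤ m := Nat.lt_succ_iff.mp h
      rw [bF_step Φ S hsh (by omega)]
      have hst : stF Φ S hsh m (fun g => ⟨qv Φ S hsh (m+1) (y g), ⟨_, rfl⟩⟩)
          = fun g => (⟨qv Φ S hsh m (y g), ⟨_, rfl⟩⟩ : Alp Φ S hsh m) := by
        funext g
        apply Subtype.ext
        exact qv_proj Φ S hsh m (y g)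
      rw [hst]
      exact ih l hl' y

end PartE

section PartF
variable {G X : Type} [Group G] [MetricSpace X] [CompactSpace X] [Nonempty X]
variable (Φ : DynAction G X) (S : Finset G) (hsh : MetricShadowing Φ (S : Set G))

noncomputable def SYS : SubshiftInvSys G ℕ where
  A n := Alp Φ S hsh n
  topoA := fun _ => inferInstance
  discA := fun n => alp_discrete Φ S hsh n
  finA := fun n => alp_finite Φ S hsh n
  Y n := Yset Φ S hsh n
  subshift n := Yset_subshift Φ S hsh n
  bond {l m} h x := ⟨bF Φ S hsh l m x.1, bF_mem Φ S hsh m l h x.1 x.2⟩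
  bond_cont {l m} h := by
    haveI := alp_discrete Φ S hsh m
    refine Continuous.subtype_mk (continuous_pi fun g => ?_) _
    obtain ⟨φ, hφ⟩ := bF_factor Φ S hsh m l
    have heq : (fun (x : ↥(Yset Φ S hsh m)) => bF Φ S hsh l m (x : G → Alp Φ S hsh m) g)
        = fun (x : ↥(Yset Φ S hsh m)) => φ ((x : G → Alp Φ S hsh m) g) := funext fun x => hφ _ g
    show Continuous (fun (x : ↥(Yset Φ S hsh m)) => bF Φ S hsh l m (x : G → Alp Φ S hsh m) g)
    rw [heq]
    exact continuous_of_discreteTopology.comp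
      ((continuous_apply g).comp continuous_subtype_val)
  bond_refl l x := Subtype.ext (bF_self Φ S hsh l x.1)
  bond_comp {l m n} h1 h2 x := Subtype.ext (bF_comp Φ S hsh n m l h1 h2 x.1)
  bond_equivariant {l m} h g x := Subtype.ext ((bF_shift Φ S hsh m l h g x.1).symm)

end PartF

section PartG
variable {G X : Type} [Group G] [MetricSpace X] [CompactSpace X] [Nonempty X]
variable (Φ : DynAction G X) (S : Finset G) (hsh : MetricShadowing Φ (S : Set G))

def GdP (x : ∀ n, G → Alp Φ S hsh n) (z : X) : Prop :=
  ∀ (n : ℕ) (g : G), dist (Φ.act g z) ((x n g : X)) ≤ (1/2) ^ n + 4 * rl Φ S hsh n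

lemma consec (x : ∀ n, G → Alp Φ S hsh n)
    (hcomp : ∀ l m, l ≤ m → bF Φ S hsh l m (x m) = x l) (n : ℕ) (g : G) :
    (x n g : X) = qv Φ S hsh n ((x (n+1) g : X)) := by
  have h1 := hcomp n (n+1) (Nat.le_succ n)
  have h2 : bF Φ S hsh n (n+1) (x (n+1)) = stF Φ S hsh n (x (n+1)) := by
    rw [bF_step Φ S hsh (by omega), bF_self]
  rw [h2] at h1
  have h3 := congrFun h1 g
  rw [← h3]
  rfl

lemma tele (x : ∀ n, G → Alp Φ S hsh n)
    (hcomp : ∀ l m, l ≤ m → bF Φ S hsh l m (x m) = x l) :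
    ∀ n m, n ≤ m → ∀ g : G, dist ((x n g : X)) ((x m g : X))
      ≤ 4 * rl Φ S hsh n - 4 * rl Φ S hsh m := by
  intro n m hnm
  induction m, hnm using Nat.le_induction with
  | base => intro g; simp
  | succ m hm ih =>
    intro g
    have h1 : dist ((x m g : X)) ((x (m+1) g : X)) ≤ 2 * rl Φ S hsh m := by
      rw [consec Φ S hsh x hcomp m g]
      exact qv_dist Φ S hsh m _
    have h2 := rl_succ Φ S hsh m
    have h3 := ih g
    calc dist ((x n g : X)) ((x (m+1) g : X))
        ≤ dist ((x n g : X)) ((x m g : X)) + dist ((x m g : X)) ((x (m+1) g : X)) :=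
          dist_triangle _ _ _
      _ ≤ 4 * rl Φ S hsh n - 4 * rl Φ S hsh (m+1) := by linarith

lemma Gd_exists (x : ∀ n, G → Alp Φ S hsh n) (hY : ∀ n, x n ∈ Yset Φ S hsh n)
    (hcomp : ∀ l m, l ≤ m → bF Φ S hsh l m (x m) = x l) :
    ∃ z : X, GdP Φ S hsh x z := by
  have hpo : ∀ n, IsMetricPseudoOrbit Φ (S : Set G) (shD Φ S hsh n)
      (fun g => ((x n g : X))) := by
    intro n g s hs
    exact lt_of_le_of_lt (hY n g s hs) (dl_lt_shD Φ S hsh n)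
  have hz : ∀ n, ∃ z, ∀ g, dist (Φ.act g z) ((x n g : X)) < (1/2) ^ n := fun n =>
    shD_shadow Φ S hsh n _ (hpo n)
  choose zf hzf using hz
  have htele : ∀ n m, n ≤ m → ∀ g : G, dist ((x n g : X)) ((x m g : X))
      ≤ 4 * rl Φ S hsh n :=
    fun n m h g => le_trans (tele Φ S hsh x hcomp n m h g) (by linarith [rl_pos Φ S hsh m])
  have hb : ∀ n m N, N ≤ n → N ≤ m →
      dist (zf n) (zf m) ≤ 2 * (1/2)^N + 8 * rl Φ S hsh N := by
    intro n m N hn hm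
    have e1 : dist (zf n) ((x n 1 : X)) < (1/2)^n := by
      have := hzf n 1; rwa [Φ.act_one] at this
    have e2 : dist (zf m) ((x m 1 : X)) < (1/2)^m := by
      have := hzf m 1; rwa [Φ.act_one] at this
    have t1 := htele N n hn 1
    have t2 := htele N m hm 1
    have p1 : ((1:ℝ)/2)^n ≤ (1/2)^N := pow_le_pow_of_le_one (by norm_num) (by norm_num) hn
    have p2 : ((1:ℝ)/2)^m ≤ (1/2)^N := pow_le_pow_of_le_one (by norm_num) (by norm_num) hm
    have c1 : dist ((x n 1 : X)) ((x N 1 : X)) ≤ 4 * rl Φ S hsh N := by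
      rw [dist_comm]; exact t1
    have c2 : dist ((x m 1 : X)) (zf m) ≤ (1/2)^m := by
      rw [dist_comm]; exact e2.le
    have tri1 := dist_triangle4 (zf n) ((x n 1 : X)) ((x N 1 : X)) (zf m)
    have tri2 := dist_triangle ((x N 1 : X)) ((x m 1 : X)) (zf m)
    linarith [e1.le, t2]
  have hb0 : Filter.Tendsto (fun N => 2 * (1/2:ℝ)^N + 8 * rl Φ S hsh N)
      Filter.atTop (nhds 0) := by
    have hpow : Filter.Tendsto (fun N : ℕ => ((1:ℝ)/2)^N) Filter.atTop (nhds 0) :=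
      tendsto_pow_atTop_nhds_zero_of_lt_one (by norm_num) (by norm_num)
    have hrl : Filter.Tendsto (fun N => rl Φ S hsh N) Filter.atTop (nhds 0) :=
      squeeze_zero (fun N => (rl_pos Φ S hsh N).le) (fun N => rl_le_one Φ S hsh N) hpow
    have := (hpow.const_mul 2).add (hrl.const_mul 8)
    simpa using this
  have hcs : CauchySeq zf := cauchySeq_of_le_tendsto_0 _ hb hb0
  obtain ⟨z, hzlim⟩ := cauchySeq_tendsto_of_complete hcs
  refine ⟨z, ?_⟩
  intro n g
  have hev : ∀ m, n ≤ m →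
      dist (Φ.act g (zf m)) ((x n g : X)) ≤ (1/2)^n + 4 * rl Φ S hsh n := by
    intro m hm
    have e1 := (hzf m g).le
    have t1 : dist ((x m g : X)) ((x n g : X)) ≤ 4 * rl Φ S hsh n := by
      rw [dist_comm]; exact htele n m hm g
    have p1 : ((1:ℝ)/2)^m ≤ (1/2)^n := pow_le_pow_of_le_one (by norm_num) (by norm_num) hm
    calc dist (Φ.act g (zf m)) ((x n g : X))
        ≤ dist (Φ.act g (zf m)) ((x m g : X)) + dist ((x m g : X)) ((x n g : X)) :=
          dist_triangle _ _ _
      _ ≤ (1/2)^n + 4 * rl Φ S hsh n := by linarith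
  have hlim : Filter.Tendsto (fun m => dist (Φ.act g (zf m)) ((x n g : X)))
      Filter.atTop (nhds (dist (Φ.act g z) ((x n g : X)))) :=
    (((Φ.continuous_act g).tendsto z).comp hzlim).dist tendsto_const_nhds
  exact le_of_tendsto hlim (Filter.eventually_atTop.mpr ⟨n, hev⟩)

lemma Gd_unique (x : ∀ n, G → Alp Φ S hsh n) {z z' : X}
    (h : GdP Φ S hsh x z) (h' : GdP Φ S hsh x z') : z = z' := by
  have hb : ∀ n, dist z z' ≤ 2 * ((1/2)^n + 4 * rl Φ S hsh n) := by
    intro n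
    have e1 := h n 1
    have e2 := h' n 1
    rw [Φ.act_one] at e1 e2
    have tri := dist_triangle z ((x n 1 : X)) z'
    have hc : dist ((x n 1 : X)) z' = dist z' ((x n 1 : X)) := dist_comm _ _
    linarith
  have h0 : Filter.Tendsto (fun n => 2 * ((1/2:ℝ)^n + 4 * rl Φ S hsh n))
      Filter.atTop (nhds 0) := by
    have hpow : Filter.Tendsto (fun N : ℕ => ((1:ℝ)/2)^N) Filter.atTop (nhds 0) :=
      tendsto_pow_atTop_nhds_zero_of_lt_one (by norm_num) (by norm_num)
    have hrl : Filter.Tendsto (fun N => rl Φ S hsh N) Filter.atTop (nhds 0) :=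
      squeeze_zero (fun N => (rl_pos Φ S hsh N).le) (fun N => rl_le_one Φ S hsh N) hpow
    have := ((hpow.add (hrl.const_mul 4)).const_mul 2)
    simpa using this
  have : dist z z' ≤ 0 := ge_of_tendsto' h0 hb
  exact dist_le_zero.mp this

lemma Gd_close (x x' : ∀ n, G → Alp Φ S hsh n) {z z' : X}
    (h : GdP Φ S hsh x z) (h' : GdP Φ S hsh x' z') (n : ℕ)
    (hag : x n 1 = x' n 1) :
    dist z z' ≤ 2 * ((1/2)^n + 4 * rl Φ S hsh n) := by
  have e1 := h n 1
  have e2 := h' n 1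
  rw [Φ.act_one] at e1 e2
  rw [hag] at e1
  have tri := dist_triangle z ((x' n 1 : X)) z'
  have hc : dist ((x' n 1 : X)) z' = dist z' ((x' n 1 : X)) := dist_comm _ _
  linarith

lemma Gd_shift (x : ∀ n, G → Alp Φ S hsh n) {z : X} (h : GdP Φ S hsh x z) (g : G) :
    GdP Φ S hsh (fun n => shift G (Alp Φ S hsh n) g (x n)) (Φ.act g z) := by
  intro n g'
  have e := h n (g' * g)
  rw [show Φ.act g' (Φ.act g z) = Φ.act (g' * g) z from (Φ.act_mul g' g z).symm]
  exact e

end PartG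

noncomputable def SYSempty (G : Type) [Group G] : SubshiftInvSys G ℕ where
  A _ := Unit
  topoA := fun _ => ⊥
  discA := fun _ => ⟨rfl⟩
  finA := fun _ => inferInstance
  Y _ := (∅ : Set (G → Unit))
  subshift _ := ⟨isClosed_empty, fun _ x hx => absurd hx (Set.notMem_empty x)⟩
  bond _ x := absurd x.2 (Set.notMem_empty _)
  bond_cont {l m} h := by
    haveI : IsEmpty ↥(∅ : Set (G → Unit)) := ⟨fun x => Set.notMem_empty _ x.2⟩
    constructor
    intro s _
    have : (fun x : ↥(∅ : Set (G → Unit)) => absurd x.2 (Set.notMem_empty _)) ⁻¹' s = ∅ :=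
      Set.eq_empty_of_isEmpty _
    rw [this]
    exact isOpen_empty
  bond_refl l x := absurd x.2 (Set.notMem_empty _)
  bond_comp h1 h2 x := absurd x.2 (Set.notMem_empty _)
  bond_equivariant h g x := absurd x.2 (Set.notMem_empty _)

lemma SYSempty_SFT (G : Type) [Group G] (S : Finset G) (n : ℕ) :
    IsSFTOver (insert (1 : G) S) ((SYSempty G).Y n) := by
  refine ⟨Set.univ, ?_⟩
  ext x
  constructor
  · intro hx
    exact absurd hx (Set.notMem_empty x)
  · intro hx
    exact absurd (fun b _ => rfl) (hx 1 (shift G Unit 1 x) (Set.mem_univ _))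

/-- **Theorem 1.3.** If `X` is a compact metric space and `Φ` has the (metric)
`S`-shadowing property, then there is an inverse system, indexed by `ℕ`, of shifts of
finite type over `S ∪ {e_G}`, such that `(X,G,Φ)` is a factor of its inverse limit. -/
theorem metric_shadowing_factor_of_invlim_SFT
    {G X : Type} [Group G] [Countable G] [MetricSpace X] [CompactSpace X]
    (Φ : DynAction G X) (S : Finset G)
    (hsh : MetricShadowing Φ (S : Set G)) :
    ∃ 𝒮 : SubshiftInvSys G ℕ,
      (∀ n : ℕ, IsSFTOver (insert (1 : G) S) (𝒮.Y n)) ∧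
      ∃ f : ↥𝒮.limitSet → X, IsFactorMap 𝒮.limitDyn Φ f := by
  rcases isEmpty_or_nonempty X with hX | hX
  · refine ⟨SYSempty G, SYSempty_SFT G S, ?_⟩
    haveI hEY : ∀ n : ℕ, IsEmpty ↥((SYSempty G).Y n) :=
      fun n => ⟨fun x => Set.notMem_empty _ x.2⟩
    haveI hEL : IsEmpty ↥(SYSempty G).limitSet :=
      ⟨fun x => (hEY 0).false (x.1 0)⟩
    refine ⟨fun x => isEmptyElim x, ?_, ?_, ?_⟩
    · constructor
      intro s _
      have : (fun x : ↥(SYSempty G).limitSet => (isEmptyElim x : X)) ⁻¹' s = ∅ :=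
        Set.eq_empty_of_isEmpty _
      rw [this]
      exact isOpen_empty
    · intro z
      exact isEmptyElim z
    · intro g x
      exact isEmptyElim x
  · refine ⟨SYS Φ S hsh, fun n => Yset_SFT Φ S hsh n, ?_⟩
    have hcompat : ∀ x : ↥(SYS Φ S hsh).limitSet, ∀ l m, l ≤ m →
        bF Φ S hsh l m ((x.1 m).1) = (x.1 l).1 := by
      intro x l m h
      exact congrArg Subtype.val (x.2 l m h)
    have hYmem : ∀ (x : ↥(SYS Φ S hsh).limitSet) (n : ℕ),
        ((x.1 n).1) ∈ Yset Φ S hsh n := fun x n => (x.1 n).2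
    have hex : ∀ x : ↥(SYS Φ S hsh).limitSet,
        ∃ z, GdP Φ S hsh (fun n => (x.1 n).1) z :=
      fun x => Gd_exists Φ S hsh _ (hYmem x) (hcompat x)
    refine ⟨fun x => (hex x).choose, ?_, ?_, ?_⟩
    · -- continuity
      rw [continuous_iff_continuousAt]
      intro x
      rw [ContinuousAt, Metric.tendsto_nhds]
      intro ε hε
      obtain ⟨n, hn⟩ := exists_pow_lt_of_lt_one
        (by linarith : (0:ℝ) < ε/10) (by norm_num : (1/2:ℝ) < 1)
      have hrn := rl_le_one Φ S hsh n
      haveI := alp_discrete Φ S hsh n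
      have hevmap : Continuous (fun x' : ↥(SYS Φ S hsh).limitSet => ((x'.1 n).1) 1) :=
        (continuous_apply (1:G)).comp (continuous_subtype_val.comp
          ((continuous_apply n).comp continuous_subtype_val))
      have hopen : IsOpen {x' : ↥(SYS Φ S hsh).limitSet | ((x'.1 n).1) 1 = ((x.1 n).1) 1} := by
        have hset : {x' : ↥(SYS Φ S hsh).limitSet | ((x'.1 n).1) 1 = ((x.1 n).1) 1}
            = (fun x' : ↥(SYS Φ S hsh).limitSet => ((x'.1 n).1) 1) ⁻¹' {((x.1 n).1) 1} := rfl
        rw [hset]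
        exact (isOpen_discrete _).preimage hevmap
      refine Filter.eventually_of_mem (hopen.mem_nhds rfl) ?_
      intro x' hx'
      have hcl := Gd_close Φ S hsh (fun k => (x'.1 k).1) (fun k => (x.1 k).1)
        ((hex x').choose_spec) ((hex x).choose_spec) n hx'
      linarith
    · -- surjectivity
      intro z
      have hmemY : ∀ n : ℕ,
          (fun g => (⟨qv Φ S hsh n (Φ.act g z), ⟨_, rfl⟩⟩ : Alp Φ S hsh n))
            ∈ Yset Φ S hsh n := by
        intro n g s hs
        have h1 : dist (Φ.act s (qv Φ S hsh n (Φ.act g z))) (Φ.act s (Φ.act g z))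
            ≤ dl Φ S hsh n / 4 :=
          mod_lemma Φ S hsh n hs _ _ (qv_dist Φ S hsh n _)
        rw [← Φ.act_mul s g z] at h1
        have h3 : dist (Φ.act (s*g) z) (qv Φ S hsh n (Φ.act (s*g) z))
            ≤ 2 * rl Φ S hsh n := by
          rw [dist_comm]; exact qv_dist Φ S hsh n _
        have h5 := rl_dl Φ S hsh n
        have h6 := dl_pos Φ S hsh n
        have tri := dist_triangle (Φ.act s (qv Φ S hsh n (Φ.act g z)))
          (Φ.act (s*g) z) (qv Φ S hsh n (Φ.act (s*g) z))
        show dist (Φ.act s (qv Φ S hsh n (Φ.act g z))) (qv Φ S hsh n (Φ.act (s*g) z))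
          ≤ dl Φ S hsh n
        linarith
      have hmemL : (fun n => (⟨_, hmemY n⟩ : ↥(Yset Φ S hsh n)))
          ∈ (SYS Φ S hsh).limitSet := by
        intro l m h
        apply Subtype.ext
        exact bF_coh Φ S hsh m l h (fun g => Φ.act g z)
      set xx : ↥(SYS Φ S hsh).limitSet := ⟨_, hmemL⟩ with hxx
      refine ⟨xx, ?_⟩
      have hGd : GdP Φ S hsh (fun n => (xx.1 n).1) z := by
        intro n g
        have h1 : dist (Φ.act g z) (qv Φ S hsh n (Φ.act g z)) ≤ 2 * rl Φ S hsh n := by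
          rw [dist_comm]; exact qv_dist Φ S hsh n _
        have h2 := rl_pos Φ S hsh n
        have h3 : (0:ℝ) ≤ (1/2)^n := by positivity
        show dist (Φ.act g z) (qv Φ S hsh n (Φ.act g z)) ≤ (1/2)^n + 4 * rl Φ S hsh n
        linarith
      exact Gd_unique Φ S hsh _ ((hex xx).choose_spec) hGd
    · -- equivariance
      intro g x
      exact Gd_unique Φ S hsh (fun n => (((SYS Φ S hsh).limitDyn.act g x).1 n).1)
        ((hex _).choose_spec) (Gd_shift Φ S hsh (fun n => (x.1 n).1) ((hex x).choose_spec) g)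
end
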